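/- arXiv:1402.0401 — 8 statements merged into one kernel-verified Lean document; each statement's English description precedes it below -/
import Mathlib

section
/- Let G be a finitely generated group and let H be a subgroup of G of finite index. Then rk(H) ≤ [G:H] · (rk(G) − 1) + 1; in particular H is finitely generated. -/
/-- The rank of a subgroup: the minimal cardinality of a finite generating set. -/
noncomputable def Subgroup.rk {G : Type*} [Group G] (H : Subgroup G) : ℕ :=
  sInf {n : ℕ | ∃ S : Finset G, Subgroup.closure (S : Set G) = H ∧ S.card = n}

open Subgroup in
/-- A Schreier transversal: a finite right transversal `R` of `H` containing `1` such that
at least `R.card - 1` of the pairs `(r, s) ∈ R × S` satisfy `r * s ∈ R`. -/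
theorem exists_schreier_transversal {G : Type*} [Group G] [DecidableEq G]
    (H : Subgroup G) [H.FiniteIndex] {S : Finset G} (hS : closure (S : Set G) = ⊤) :
    ∃ R : Finset G, IsComplement (H : Set G) (R : Set G) ∧ (1 : G) ∈ R ∧
      R.card = H.index ∧
      R.card - 1 ≤ ((R ×ˢ S).filter fun p => p.1 * p.2 ∈ R).card := by
  letI := H.fintypeQuotientOfFiniteIndex
  set π : G → Quotient (QuotientGroup.rightRel H) := Quotient.mk'' with hπdef
  set Inv : Finset G → Prop := fun R => (1 : G) ∈ R ∧ Set.InjOn π ↑R ∧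
      R.card - 1 ≤ ((R ×ˢ S).filter fun p => p.1 * p.2 ∈ R).card with hInvdef
  set A : Set ℕ := {k | ∃ R : Finset G, Inv R ∧ R.card = k} with hAdef
  have h1A : (1 : ℕ) ∈ A := by
    refine ⟨{1}, ⟨Finset.mem_singleton_self 1, ?_, by simp⟩, Finset.card_singleton 1⟩
    intro a ha b hb _
    simp only [Finset.coe_singleton, Set.mem_singleton_iff] at ha hb
    rw [ha, hb]
  have hbdd : ∀ k ∈ A, k ≤ Fintype.card (Quotient (QuotientGroup.rightRel H)) := by
    rintro k ⟨R, ⟨-, hinj, -⟩, rfl⟩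
    simpa using Finset.card_le_card_of_injOn π (fun a _ => Finset.mem_univ (π a)) hinj
  obtain ⟨R, hInv, hcard⟩ : sSup A ∈ A :=
    Nat.sSup_mem ⟨1, h1A⟩ ⟨_, hbdd⟩
  obtain ⟨h1R, hinj, hfil⟩ := hInv
  have hmax : ∀ R' : Finset G, Inv R' → R'.card ≤ sSup A := fun R' h =>
    le_csSup ⟨_, hbdd⟩ ⟨R', h, rfl⟩
  -- key extension step: we cannot add a new coset representative
  have hext : ∀ (x : G) (p : G × G), π x ∉ π '' ↑R → p.1 ∈ insert x R → p.2 ∈ S →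
      p.1 * p.2 ∈ insert x R → p ∉ (R ×ˢ S).filter (fun q => q.1 * q.2 ∈ R) → False := by
    intro x p hx hp1 hp2 hp3 hp4
    have hxR : x ∉ R := fun h => hx ⟨x, h, rfl⟩
    have hcard' : (insert x R).card = R.card + 1 := Finset.card_insert_of_notMem hxR
    have hInv' : Inv (insert x R) := by
      refine ⟨Finset.mem_insert_of_mem h1R, ?_, ?_⟩
      · intro a ha b hb hab
        simp only [Finset.coe_insert, Set.mem_insert_iff] at ha hb
        rcases ha with rfl | ha <;> rcases hb with rfl | hb
        · rfl
        · exact absurd (hab ▸ ⟨b, hb, rfl⟩) hx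
        · exact absurd (hab ▸ ⟨a, ha, rfl⟩) hx
        · exact hinj ha hb hab
      · have hsub : insert p ((R ×ˢ S).filter (fun q => q.1 * q.2 ∈ R)) ⊆
            ((insert x R) ×ˢ S).filter (fun q => q.1 * q.2 ∈ insert x R) := by
          intro q hq
          rcases Finset.mem_insert.mp hq with rfl | hq
          · exact Finset.mem_filter.mpr ⟨Finset.mem_product.mpr ⟨hp1, hp2⟩, hp3⟩
          · obtain ⟨hq1, hq2⟩ := Finset.mem_filter.mp hq
            obtain ⟨hq11, hq12⟩ := Finset.mem_product.mp hq1
            exact Finset.mem_filter.mpr ⟨Finset.mem_product.mpr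
              ⟨Finset.mem_insert_of_mem hq11, hq12⟩, Finset.mem_insert_of_mem hq2⟩
        have hcardins : ((R ×ˢ S).filter (fun q => q.1 * q.2 ∈ R)).card + 1 =
            (insert p ((R ×ˢ S).filter (fun q => q.1 * q.2 ∈ R))).card :=
          (Finset.card_insert_of_notMem hp4).symm
        have := Finset.card_le_card hsub
        omega
    have := hmax _ hInv'
    omega
  -- every coset is represented
  have hcover : ∀ g : G, π g ∈ π '' ↑R := by
    intro g
    have hg : g ∈ closure (S : Set G) := hS ▸ mem_top g
    refine closure_induction_right (p := fun x _ => π x ∈ π '' ↑R) ⟨1, h1R, rfl⟩ ?_ ?_ hg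
    · rintro x hx s hs ⟨r, hrR, hπr⟩
      have heq : π (x * s) = π (r * s) := by
        refine Quotient.sound' ?_
        rw [QuotientGroup.rightRel_apply]
        have h1 : (QuotientGroup.rightRel H) r x := Quotient.exact' hπr
        rw [QuotientGroup.rightRel_apply] at h1
        have h2 : r * s * (x * s)⁻¹ = (x * r⁻¹)⁻¹ := by group
        rw [h2]
        exact H.inv_mem h1
      rw [heq]
      by_contra hnot
      refine hext (r * s) (r, s) hnot (Finset.mem_insert_of_mem hrR) hs
        (Finset.mem_insert_self _ _) ?_
      intro hmem
      have : r * s ∈ R := (Finset.mem_filter.mp hmem).2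
      exact hnot ⟨r * s, this, rfl⟩
    · rintro x hx s hs ⟨r, hrR, hπr⟩
      have heq : π (x * s⁻¹) = π (r * s⁻¹) := by
        refine Quotient.sound' ?_
        rw [QuotientGroup.rightRel_apply]
        have h1 : (QuotientGroup.rightRel H) r x := Quotient.exact' hπr
        rw [QuotientGroup.rightRel_apply] at h1
        have h2 : r * s⁻¹ * (x * s⁻¹)⁻¹ = (x * r⁻¹)⁻¹ := by group
        rw [h2]
        exact H.inv_mem h1
      rw [heq]
      by_contra hnot
      have hx1 : r * s⁻¹ ∉ R := fun h => hnot ⟨r * s⁻¹, h, rfl⟩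
      refine hext (r * s⁻¹) (r * s⁻¹, s) hnot (Finset.mem_insert_self _ _) hs ?_ ?_
      · simpa [inv_mul_cancel_right] using (Finset.mem_insert_of_mem hrR : r ∈ insert (r*s⁻¹) R)
      · intro hmem
        exact hx1 (Finset.mem_product.mp (Finset.mem_filter.mp hmem).1).1
  have hR : IsComplement (H : Set G) (R : Set G) := by
    rw [isComplement_iff_existsUnique_mul_inv_mem]
    intro g
    obtain ⟨r, hrR, hπr⟩ := hcover g
    refine ⟨⟨r, hrR⟩, ?_, ?_⟩
    · have : (QuotientGroup.rightRel H) r g := Quotient.exact' hπr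
      rw [QuotientGroup.rightRel_apply] at this
      exact this
    · rintro ⟨r', hr'⟩ hmem
      have h2 : (QuotientGroup.rightRel H) r' g := by
        rw [QuotientGroup.rightRel_apply]
        exact hmem
      have h3 : π r' = π g := Quotient.sound' h2
      have : r' = r := hinj hr' hrR (h3.trans hπr.symm)
      exact Subtype.ext this
  refine ⟨R, hR, h1R, ?_, hfil⟩
  calc R.card = Fintype.card R := (Fintype.card_coe R).symm
    _ = Fintype.card (Quotient (QuotientGroup.rightRel H)) :=
      (Fintype.card_congr hR.rightQuotientEquiv).symm
    _ = Fintype.card (G ⧸ H) := QuotientGroup.card_quotient_rightRel H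
    _ = H.index := by rw [index_eq_card, Nat.card_eq_fintype_card]

open scoped Pointwise

/-- if `G` is a finitely generated group and `H` is a subgroup of finite
index, then `rk(H) ≤ [G:H]·(rk(G) − 1) + 1`; in particular `H` is finitely generated
(witnessed by a generating set of cardinality at most `[G:H]·(rk(G) − 1) + 1`). -/
theorem rank_le_of_finiteIndex {G : Type*} [Group G] [Group.FG G]
    (H : Subgroup G) [H.FiniteIndex] :
    ∃ S : Finset G, Subgroup.closure (S : Set G) = H ∧
      S.card ≤ H.index * (Subgroup.rk (⊤ : Subgroup G) - 1) + 1 := by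
  classical
  obtain ⟨S, hS, hScard⟩ : ∃ S : Finset G, Subgroup.closure (S : Set G) = (⊤ : Subgroup G) ∧
      S.card = Subgroup.rk (⊤ : Subgroup G) := by
    have hne : {n : ℕ | ∃ S : Finset G, Subgroup.closure (S : Set G) = (⊤ : Subgroup G) ∧
        S.card = n}.Nonempty := by
      obtain ⟨n, S, -, hclos⟩ := Group.fg_iff'.mp ‹Group.FG G›
      exact ⟨S.card, S, hclos, rfl⟩
    obtain ⟨S, h1, h2⟩ := Nat.sInf_mem hne
    exact ⟨S, h1, h2⟩
  obtain ⟨R, hR, h1R, hRcard, hfil⟩ := exists_schreier_transversal H hS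
  set f : G → G := fun g => g * ((hR.toRightFun g : G))⁻¹ with hfdef
  set T : Finset G := ((R ×ˢ S).image fun p => f (p.1 * p.2)).erase 1 with hTdef
  have himg : (((R ×ˢ S).image fun p => f (p.1 * p.2)) : Set G)
      = ((R : Set G) * (S : Set G)).image f := by
    ext x
    simp only [Finset.coe_image, Set.mem_image, Finset.mem_coe, Finset.mem_product,
      Set.mem_mul, Prod.exists]
    constructor
    · rintro ⟨a, b, ⟨ha, hb⟩, rfl⟩; exact ⟨a * b, ⟨a, ha, b, hb, rfl⟩, rfl⟩
    · rintro ⟨y, ⟨a, ha, b, hb, rfl⟩, rfl⟩; exact ⟨a, b, ⟨ha, hb⟩, rfl⟩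
  have hclos : Subgroup.closure (((R ×ˢ S).image fun p => f (p.1 * p.2)) : Set G) = H := by
    rw [himg]
    exact Subgroup.closure_mul_image_eq hR h1R hS
  refine ⟨T, ?_, ?_⟩
  · apply le_antisymm
    · rw [Subgroup.closure_le]
      intro x hx
      exact hclos ▸ Subgroup.subset_closure
        (Finset.mem_coe.mpr (Finset.mem_of_mem_erase (Finset.mem_coe.mp hx)))
    · rw [← hclos, Subgroup.closure_le]
      intro x hx
      by_cases hx1 : x = 1
      · subst hx1; exact (Subgroup.closure _).one_mem
      · exact Subgroup.subset_closure
          (Finset.mem_coe.mpr (Finset.mem_erase.mpr ⟨hx1, Finset.mem_coe.mp hx⟩))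
  · have hsub : T ⊆ ((R ×ˢ S).filter fun p => p.1 * p.2 ∉ R).image fun p => f (p.1 * p.2) := by
      intro t ht
      obtain ⟨ht1, htimg⟩ := Finset.mem_erase.mp ht
      obtain ⟨p, hp, rfl⟩ := Finset.mem_image.mp htimg
      refine Finset.mem_image.mpr ⟨p, Finset.mem_filter.mpr ⟨hp, fun hmem => ht1 ?_⟩, rfl⟩
      have huniq := (Subgroup.isComplement_iff_existsUnique_mul_inv_mem.mp hR
        (p.1 * p.2)).unique (hR.mul_inv_toRightFun_mem (p.1 * p.2))
        (show (p.1 * p.2) * ((⟨p.1 * p.2, Finset.mem_coe.mpr hmem⟩ : (R : Set G)) : G)⁻¹ ∈ H by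
          rw [show ((⟨p.1 * p.2, Finset.mem_coe.mpr hmem⟩ : (R : Set G)) : G) = p.1 * p.2
            from rfl, mul_inv_cancel]
          exact H.one_mem)
      simp only [hfdef]
      rw [huniq]
      show (p.1 * p.2) * (p.1 * p.2)⁻¹ = 1
      group
    have h1 : T.card ≤ ((R ×ˢ S).filter fun p => p.1 * p.2 ∉ R).card :=
      (Finset.card_le_card hsub).trans Finset.card_image_le
    have h2 : ((R ×ˢ S).filter fun p => p.1 * p.2 ∈ R).card
        + ((R ×ˢ S).filter fun p => p.1 * p.2 ∉ R).card = H.index * S.card := by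
      rw [Finset.card_filter_add_card_filter_not, Finset.card_product, hRcard]
    have hfil' : H.index - 1 ≤ ((R ×ˢ S).filter fun p => p.1 * p.2 ∈ R).card := by
      rwa [hRcard] at hfil
    have hpos : 1 ≤ H.index := Nat.pos_of_ne_zero Subgroup.FiniteIndex.index_ne_zero
    have key : T.card ≤ H.index * (S.card - 1) + 1 := by
      rcases Nat.eq_zero_or_pos S.card with h0 | hp
      · rw [h0, mul_zero] at h2
        omega
      · have hmul : H.index * S.card = H.index * (S.card - 1) + H.index := by
          conv_lhs => rw [← Nat.succ_pred_eq_of_pos hp]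
          rw [Nat.mul_succ, Nat.pred_eq_sub_one]
        omega
    rwa [hScard] at key
end

section
/- Let G be a group with a subgroup F of finite index m. Let n_1, n_2 ≥ 1 and let C be a natural number such that for all subgroups K_1, K_2 of F that are generated by at most m(n_1 − 1) + 1 and at most m(n_2 − 1) + 1 elements respectively, the intersection K_1 ∩ K_2 is generated by at most C elements. Then for all subgroups H_1, H_2 of G generated by at most n_1 and n_2 elements respectively, the intersection H_1 ∩ H_2 is generated by at most C + m − 1 elements. -/
/-- `H` is generated by at most `n` elements. -/
def Subgroup.GenLE {G : Type*} [Group G] (H : Subgroup G) (n : ℕ) : Prop :=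
  ∃ S : Finset G, Subgroup.closure (S : Set G) = H ∧ S.card ≤ n

namespace SchreierRefined

variable {G : Type*} [Group G] (H : Subgroup G) (S : Finset G)

/-- Minimal length of a word in `S ∪ S⁻¹` representing the right coset `c`. -/
noncomputable def len (c : Quotient (QuotientGroup.rightRel H)) : ℕ :=
  sInf {n | ∃ l : List G, (∀ x ∈ l, x ∈ S ∨ x⁻¹ ∈ S) ∧ l.length = n ∧
    Quotient.mk'' l.prod = c}

variable (hS : Subgroup.closure (S : Set G) = ⊤)
include hS

lemma exists_word (g : G) : ∃ l : List G, (∀ x ∈ l, x ∈ S ∨ x⁻¹ ∈ S) ∧ l.prod = g := by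
  have hg : g ∈ (Subgroup.closure (S : Set G)).toSubmonoid := by
    rw [hS]; trivial
  rw [Subgroup.closure_toSubmonoid] at hg
  obtain ⟨l, hl, hp⟩ := Submonoid.exists_list_of_mem_closure hg
  refine ⟨l, fun x hx => ?_, hp⟩
  rcases hl x hx with h | h
  · exact Or.inl h
  · exact Or.inr (Set.mem_inv.mp h)

lemma len_spec (c : Quotient (QuotientGroup.rightRel H)) :
    ∃ l : List G, (∀ x ∈ l, x ∈ S ∨ x⁻¹ ∈ S) ∧ l.length = len H S c ∧
      Quotient.mk'' l.prod = c := by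
  have hne : {n | ∃ l : List G, (∀ x ∈ l, x ∈ S ∨ x⁻¹ ∈ S) ∧ l.length = n ∧
      Quotient.mk'' l.prod = c}.Nonempty := by
    induction c using Quotient.inductionOn' with
    | h g =>
      obtain ⟨l, hl, hp⟩ := exists_word S hS g
      exact ⟨l.length, l, hl, rfl, by rw [hp]⟩
  exact Nat.sInf_mem hne

omit hS in
lemma len_le (l : List G) (hl : ∀ x ∈ l, x ∈ S ∨ x⁻¹ ∈ S) :
    len H S (Quotient.mk'' l.prod) ≤ l.length :=
  Nat.sInf_le ⟨l, hl, rfl, rfl⟩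

lemma len_zero {c : Quotient (QuotientGroup.rightRel H)} (h : len H S c = 0) :
    c = Quotient.mk'' (1 : G) := by
  obtain ⟨l, hl, hlen, hmk⟩ := len_spec H S hS c
  rw [h] at hlen
  rw [List.length_eq_zero_iff] at hlen
  subst hlen
  simpa using hmk.symm

omit hS in
lemma len_mk_one : len H S (Quotient.mk'' (1 : G)) = 0 :=
  Nat.le_zero.mp (by simpa using len_le H S ([] : List G) (by simp))

/-- A "Schreier" system of coset representatives, built recursively along shortest words. -/
noncomputable def rep (c : Quotient (QuotientGroup.rightRel H)) : G :=
  if h : len H S c = 0 then 1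
  else
    rep (Quotient.mk'' (len_spec H S hS c).choose.dropLast.prod) *
      (len_spec H S hS c).choose.getLast (fun hnil => h (by
        have := (len_spec H S hS c).choose_spec.2.1
        rw [hnil] at this
        simpa using this.symm))
termination_by len H S c
decreasing_by
  obtain ⟨hw, hlen, hmk⟩ := (len_spec H S hS c).choose_spec
  have h1 : len H S (Quotient.mk'' (len_spec H S hS c).choose.dropLast.prod) ≤
      (len_spec H S hS c).choose.dropLast.length :=
    len_le H S _ (fun x hx => hw x (List.dropLast_subset _ hx))
  rw [List.length_dropLast, hlen] at h1
  omega



omit hS in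
lemma mk_mul_right {a b : G} (x : G)
    (h : (Quotient.mk'' a : Quotient (QuotientGroup.rightRel H)) = Quotient.mk'' b) :
    (Quotient.mk'' (a * x) : Quotient (QuotientGroup.rightRel H)) = Quotient.mk'' (b * x) := by
  rw [Quotient.eq''] at h ⊢
  rw [QuotientGroup.rightRel_apply] at h ⊢
  simpa [mul_assoc] using h

lemma rep_mk : ∀ c : Quotient (QuotientGroup.rightRel H), Quotient.mk'' (rep H S hS c) = c := by
  suffices h : ∀ n (c : Quotient (QuotientGroup.rightRel H)), len H S c = n →
      Quotient.mk'' (rep H S hS c) = c by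
    exact fun c => h (len H S c) c rfl
  intro n
  induction n using Nat.strong_induction_on with
  | _ n ih =>
    intro c hc
    by_cases h : len H S c = 0
    · rw [rep, dif_pos h]
      exact (len_zero H S hS h).symm
    · rw [rep, dif_neg h]
      obtain ⟨hw, hlen, hmk⟩ := (len_spec H S hS c).choose_spec
      set l := (len_spec H S hS c).choose with hl
      have hnil : l ≠ [] := fun hn => h (by rw [hn] at hlen; simpa using hlen.symm)
      have hlt : len H S (Quotient.mk'' l.dropLast.prod) < n := by
        have h1 : len H S (Quotient.mk'' l.dropLast.prod) ≤ l.dropLast.length :=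
          len_le H S _ (fun x hx => hw x (List.dropLast_subset _ hx))
        rw [List.length_dropLast, hlen, hc] at h1
        omega
      have hrec := ih _ hlt _ rfl
      have := mk_mul_right H (l.getLast hnil) hrec
      rw [this]
      have : l.dropLast.prod * l.getLast hnil = l.prod := by
        conv_rhs => rw [← List.dropLast_append_getLast hnil]
        rw [List.prod_append, List.prod_singleton]
      rw [this, hmk]

lemma rep_injective {c₁ c₂ : Quotient (QuotientGroup.rightRel H)}
    (h : rep H S hS c₁ = rep H S hS c₂) : c₁ = c₂ := by
  rw [← rep_mk H S hS c₁, ← rep_mk H S hS c₂, h]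

lemma rep_mk_one : rep H S hS (Quotient.mk'' (1 : G)) = 1 := by
  rw [rep, dif_pos (len_mk_one H S)]

lemma mul_inv_rep_mem (a : G) : a * (rep H S hS (Quotient.mk'' a))⁻¹ ∈ H := by
  have := rep_mk H S hS (Quotient.mk'' a)
  rw [Quotient.eq'', QuotientGroup.rightRel_apply] at this
  exact this

lemma rep_parent {c : Quotient (QuotientGroup.rightRel H)} (h : len H S c ≠ 0) :
    ∃ c' x, x ∈ S ∧ len H S c' < len H S c ∧
      (rep H S hS c = rep H S hS c' * x ∨ rep H S hS c = rep H S hS c' * x⁻¹) := by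
  obtain ⟨hw, hlen, hmk⟩ := (len_spec H S hS c).choose_spec
  set l := (len_spec H S hS c).choose with hl
  have hnil : l ≠ [] := fun hn => h (by rw [hn] at hlen; simpa using hlen.symm)
  have hlt : len H S (Quotient.mk'' l.dropLast.prod) < len H S c := by
    have h1 : len H S (Quotient.mk'' l.dropLast.prod) ≤ l.dropLast.length :=
      len_le H S _ (fun x hx => hw x (List.dropLast_subset _ hx))
    rw [List.length_dropLast, hlen] at h1
    omega
  have heq : rep H S hS c =
      rep H S hS (Quotient.mk'' l.dropLast.prod) * l.getLast hnil := by
    rw [rep, dif_neg h]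
  rcases hw _ (List.getLast_mem hnil) with hx | hx
  · exact ⟨_, _, hx, hlt, Or.inl heq⟩
  · exact ⟨_, _, hx, hlt, Or.inr (by rw [heq, inv_inv])⟩



/-- Schreier generator attached to a coset `c` and a generator `s`. -/
noncomputable def gf (c : Quotient (QuotientGroup.rightRel H)) (s : G) : G :=
  rep H S hS c * s * (rep H S hS (Quotient.mk'' (rep H S hS c * s)))⁻¹

lemma gf_mem (c : Quotient (QuotientGroup.rightRel H)) (s : G) : gf H S hS c s ∈ H :=
  mul_inv_rep_mem H S hS _

lemma closure_gf :
    Subgroup.closure ((fun p : Quotient (QuotientGroup.rightRel H) × G => gf H S hS p.1 p.2) ''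
      (Set.univ ×ˢ (S : Set G))) = H := by
  set U : Set G := (fun p : Quotient (QuotientGroup.rightRel H) × G => gf H S hS p.1 p.2) ''
      (Set.univ ×ˢ (S : Set G)) with hU
  refine le_antisymm (Subgroup.closure_le H |>.mpr ?_) ?_
  · rintro - ⟨p, -, rfl⟩
    exact gf_mem H S hS p.1 p.2
  · intro h hh
    have key : ∀ g ∈ Subgroup.closure (S : Set G),
        g * (rep H S hS (Quotient.mk'' g))⁻¹ ∈ Subgroup.closure U := by
      intro g hg
      induction hg using Subgroup.closure_induction_right with
      | one => simpa [rep_mk_one H S hS] using one_mem _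
      | mul_right x hx y hy ih =>
        have hmk : (Quotient.mk'' (rep H S hS (Quotient.mk'' x) * y) :
            Quotient (QuotientGroup.rightRel H)) = Quotient.mk'' (x * y) :=
          mk_mul_right H y (rep_mk H S hS _)
        have hgf : gf H S hS (Quotient.mk'' x) y ∈ Subgroup.closure U :=
          Subgroup.subset_closure ⟨(Quotient.mk'' x, y), ⟨trivial, hy⟩, rfl⟩
        have := mul_mem ih hgf
        have heq : x * (rep H S hS (Quotient.mk'' x))⁻¹ * gf H S hS (Quotient.mk'' x) y =
            x * y * (rep H S hS (Quotient.mk'' (x * y)))⁻¹ := by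
          rw [gf, hmk]; group
        rwa [heq] at this
      | mul_inv_cancel x hx y hy ih =>
        have hmk : (Quotient.mk'' (rep H S hS (Quotient.mk'' (x * y⁻¹)) * y) :
            Quotient (QuotientGroup.rightRel H)) = Quotient.mk'' x := by
          have := mk_mul_right H y (rep_mk H S hS (Quotient.mk'' (x * y⁻¹)))
          rwa [inv_mul_cancel_right] at this
        have hgf : gf H S hS (Quotient.mk'' (x * y⁻¹)) y ∈ Subgroup.closure U :=
          Subgroup.subset_closure ⟨(Quotient.mk'' (x * y⁻¹), y), ⟨trivial, hy⟩, rfl⟩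
        have := mul_mem ih (inv_mem hgf)
        have heq : x * (rep H S hS (Quotient.mk'' x))⁻¹ *
            (gf H S hS (Quotient.mk'' (x * y⁻¹)) y)⁻¹ =
            x * y⁻¹ * (rep H S hS (Quotient.mk'' (x * y⁻¹)))⁻¹ := by
          rw [gf, hmk]; group
        rwa [heq] at this
    have hmem : h ∈ Subgroup.closure (S : Set G) := by rw [hS]; trivial
    have := key h hmem
    have hmk1 : (Quotient.mk'' h : Quotient (QuotientGroup.rightRel H)) = Quotient.mk'' 1 := by
      rw [Quotient.eq'', QuotientGroup.rightRel_apply]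
      simpa using hh
    rwa [hmk1, rep_mk_one H S hS, inv_one, mul_one] at this

lemma gf_eq_one {a c'' : Quotient (QuotientGroup.rightRel H)} {x : G}
    (h : rep H S hS a * x = rep H S hS c'') : gf H S hS a x = 1 := by
  rw [gf, h, rep_mk H S hS c'', mul_inv_cancel]

lemma exists_pair {c : Quotient (QuotientGroup.rightRel H)} (h : len H S c ≠ 0) :
    ∃ a x, x ∈ S ∧ gf H S hS a x = 1 ∧
      ((rep H S hS c = rep H S hS a * x ∧ len H S a < len H S c) ∨
        (a = c ∧ ∃ c'', rep H S hS c * x = rep H S hS c'' ∧ len H S c'' < len H S c)) := by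
  obtain ⟨c', x, hx, hlt, hcase⟩ := rep_parent H S hS h
  rcases hcase with heq | heq
  · exact ⟨c', x, hx, gf_eq_one H S hS heq.symm, Or.inl ⟨heq, hlt⟩⟩
  · have h2 : rep H S hS c * x = rep H S hS c' := by rw [heq, inv_mul_cancel_right]
    exact ⟨c, x, hx, gf_eq_one H S hS h2, Or.inr ⟨rfl, c', h2, hlt⟩⟩



end SchreierRefined

namespace SchreierRefined

theorem schreier {G : Type*} [Group G] (H : Subgroup G) [H.FiniteIndex] {S : Finset G}
    (hS : Subgroup.closure (S : Set G) = ⊤) :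
    ∃ T : Finset G, Subgroup.closure (T : Set G) = H ∧ T.card ≤ H.index * (S.card - 1) + 1 := by
  classical
  haveI := H.fintypeQuotientOfFiniteIndex
  haveI : Fintype (Quotient (QuotientGroup.rightRel H)) :=
    Fintype.ofEquiv _ (QuotientGroup.quotientRightRelEquivQuotientLeftRel H).symm
  set Q := Quotient (QuotientGroup.rightRel H) with hQ
  have hd : Fintype.card Q = H.index := by
    rw [Subgroup.index_eq_card, Nat.card_eq_fintype_card]
    exact Fintype.card_congr (QuotientGroup.quotientRightRelEquivQuotientLeftRel H)
  set g : Q × G → G := fun p => gf H S hS p.1 p.2 with hg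
  set D : Finset (Q × G) := Finset.univ ×ˢ S with hD
  refine ⟨(D.image g).erase 1, ?_, ?_⟩
  · -- closure
    have h1 : Subgroup.closure ((D.image g : Finset G) : Set G) = H := by
      rw [Finset.coe_image, hD, Finset.coe_product, Finset.coe_univ]
      exact closure_gf H S hS
    rw [← h1]
    refine le_antisymm (Subgroup.closure_mono (Finset.coe_subset.mpr (Finset.erase_subset _ _)))
      ((Subgroup.closure_le _).mpr ?_)
    intro x hx
    by_cases hx1 : x = 1
    · subst hx1; exact one_mem _
    · exact Subgroup.subset_closure (Finset.mem_erase.mpr ⟨hx1, hx⟩)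
  · -- cardinality
    have hsub : (D.image g).erase 1 ⊆ (D.filter (fun p => ¬ g p = 1)).image g := by
      intro x hx
      obtain ⟨hx1, hx2⟩ := Finset.mem_erase.mp hx
      obtain ⟨p, hp, hpx⟩ := Finset.mem_image.mp hx2
      exact Finset.mem_image.mpr ⟨p, Finset.mem_filter.mpr ⟨hp, by rw [hpx]; exact hx1⟩, hpx⟩
    have hcard1 : ((D.image g).erase 1).card ≤ (D.filter (fun p => ¬ g p = 1)).card :=
      (Finset.card_le_card hsub).trans Finset.card_image_le
    -- the injection from non-root cosets into trivial pairs
    set f : Q → Q × G := fun c =>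
      if h : len H S c = 0 then (c, 1)
      else ((exists_pair H S hS h).choose, (exists_pair H S hS h).choose_spec.choose) with hf
    have hne : ∀ c : Q, c ∈ Finset.univ.erase (Quotient.mk'' (1 : G)) → len H S c ≠ 0 := by
      intro c hc h0
      exact (Finset.mem_erase.mp hc).1 (len_zero H S hS h0)
    have hspec : ∀ (c : Q) (h : len H S c ≠ 0), (f c).2 ∈ S ∧ g (f c) = 1 ∧
        ((rep H S hS c = rep H S hS (f c).1 * (f c).2 ∧ len H S (f c).1 < len H S c) ∨
          ((f c).1 = c ∧ ∃ c'', rep H S hS c * (f c).2 = rep H S hS c'' ∧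
            len H S c'' < len H S c)) := by
      intro c h
      have := (exists_pair H S hS h).choose_spec.choose_spec
      rw [hf]
      simp only [dif_neg h]
      exact this
    have hmaps : ∀ c ∈ Finset.univ.erase (Quotient.mk'' (1 : G)),
        f c ∈ D.filter (fun p => g p = 1) := by
      intro c hc
      obtain ⟨h1, h2, -⟩ := hspec c (hne c hc)
      exact Finset.mem_filter.mpr ⟨Finset.mem_product.mpr ⟨Finset.mem_univ _, h1⟩, h2⟩
    have hinj : Set.InjOn f ((Finset.univ.erase (Quotient.mk'' (1 : G)) : Finset Q) : Set Q) := by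
      intro c₁ hc₁ c₂ hc₂ hfe
      by_contra hne12
      obtain ⟨-, -, hcase₁⟩ := hspec c₁ (hne c₁ hc₁)
      obtain ⟨-, -, hcase₂⟩ := hspec c₂ (hne c₂ hc₂)
      rw [hfe] at hcase₁
      rcases hcase₁ with ⟨he₁, hl₁⟩ | ⟨he₁, c₁'', he₁', hl₁⟩ <;>
        rcases hcase₂ with ⟨he₂, hl₂⟩ | ⟨he₂, c₂'', he₂', hl₂⟩
      · exact hne12 (rep_injective H S hS (he₁.trans he₂.symm))
      · rw [he₂] at he₁ hl₁
        have h12 := rep_injective H S hS (he₁.trans he₂')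
        rw [← h12] at hl₂
        omega
      · rw [he₁] at he₂ hl₂
        have h21 := rep_injective H S hS (he₂.trans he₁')
        rw [← h21] at hl₁
        omega
      · exact hne12 (he₁.symm.trans he₂)
    have hcard2 : (Finset.univ.erase (Quotient.mk'' (1 : G)) : Finset Q).card ≤
        (D.filter (fun p => g p = 1)).card :=
      Finset.card_le_card_of_injOn f hmaps hinj
    have hcard3 : (Finset.univ.erase (Quotient.mk'' (1 : G)) : Finset Q).card =
        Fintype.card Q - 1 := by
      rw [Finset.card_erase_of_mem (Finset.mem_univ _), Finset.card_univ]
    have hcard4 : (D.filter (fun p => g p = 1)).card +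
        (D.filter (fun p => ¬ g p = 1)).card = D.card :=
      Finset.card_filter_add_card_filter_not _
    have hcard5 : D.card = Fintype.card Q * S.card := by
      rw [hD, Finset.card_product, Finset.card_univ]
    rw [← hd]
    rcases Nat.eq_zero_or_pos S.card with hn | hn
    · have h0 : Fintype.card Q * S.card = 0 := by rw [hn, Nat.mul_zero]
      omega
    · obtain ⟨k, hk⟩ : ∃ k, S.card = k + 1 := ⟨S.card - 1, by omega⟩
      have hmm : Fintype.card Q * S.card = Fintype.card Q * k + Fintype.card Q := by
        rw [hk, Nat.mul_succ]
      have hk' : S.card - 1 = k := by omega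
      rw [hk']
      omega



/-- If `L ≤ H` with finite relative index `e`, and `L` is generated by `T`, then `H` is
generated by `T` together with `e - 1` further elements. -/
theorem extension_step {G : Type*} [Group G] {H L : Subgroup G} (hLH : L ≤ H)
    [hFI : (L.subgroupOf H).FiniteIndex] {T : Finset G} (hT : Subgroup.closure (T : Set G) = L) :
    ∃ T' : Finset G, Subgroup.closure (T' : Set G) = H ∧
      T'.card ≤ T.card + ((L.subgroupOf H).index - 1) := by
  classical
  haveI := (L.subgroupOf H).fintypeQuotientOfFiniteIndex
  set σ : H ⧸ L.subgroupOf H → H := fun q =>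
    if q = QuotientGroup.mk 1 then 1 else q.out with hσ
  have hσ_mk : ∀ q, QuotientGroup.mk (σ q) = q := by
    intro q
    by_cases h : q = QuotientGroup.mk 1
    · rw [hσ]; simp only [if_pos h]; rw [h]
    · rw [hσ]; simp only [if_neg h]; exact QuotientGroup.out_eq' q
  set R : Finset G := (Finset.univ.image fun q => ((σ q : H) : G)).erase 1 with hR
  refine ⟨T ∪ R, ?_, ?_⟩
  · refine le_antisymm ((Subgroup.closure_le _).mpr ?_) ?_
    · intro x hx
      rcases Finset.mem_union.mp hx with hx | hx
      · exact hLH (hT ▸ Subgroup.subset_closure hx)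
      · obtain ⟨q, -, hq⟩ := Finset.mem_image.mp (Finset.mem_of_mem_erase hx)
        rw [← hq]; exact (σ q).2
    · intro x hx
      set q : H ⧸ L.subgroupOf H := QuotientGroup.mk ⟨x, hx⟩ with hq
      have h1 : (σ q)⁻¹ * (⟨x, hx⟩ : H) ∈ L.subgroupOf H := by
        rw [← QuotientGroup.eq, hσ_mk]
      have hσ_mem : ((σ q : H) : G) ∈ Subgroup.closure ((T ∪ R : Finset G) : Set G) := by
        by_cases h : ((σ q : H) : G) = 1
        · rw [h]; exact one_mem _
        · refine Subgroup.subset_closure ?_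
          refine Finset.mem_union_right _ (Finset.mem_erase.mpr ⟨h, ?_⟩)
          exact Finset.mem_image.mpr ⟨q, Finset.mem_univ _, rfl⟩
      have h2 : ((σ q)⁻¹ * (⟨x, hx⟩ : H) : H).1 ∈ L := h1
      have h3 : ((σ q)⁻¹ * (⟨x, hx⟩ : H) : H).1 ∈
          Subgroup.closure ((T ∪ R : Finset G) : Set G) := by
        rw [← hT] at h2
        exact Subgroup.closure_mono (by simp [Finset.coe_union]) h2
      have := mul_mem hσ_mem h3
      simpa using this
  · calc (T ∪ R).card ≤ T.card + R.card := Finset.card_union_le _ _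
      _ ≤ T.card + ((L.subgroupOf H).index - 1) := by
        have h1 : (1 : G) ∈ Finset.univ.image fun q => ((σ q : H) : G) := by
          refine Finset.mem_image.mpr ⟨QuotientGroup.mk 1, Finset.mem_univ _, ?_⟩
          rw [hσ]; simp
        have h2 : R.card = (Finset.univ.image fun q => ((σ q : H) : G)).card - 1 :=
          Finset.card_erase_of_mem h1
        have h3 : (Finset.univ.image fun q => ((σ q : H) : G)).card ≤
            (L.subgroupOf H).index := by
          refine (Finset.card_image_le).trans ?_
          rw [Finset.card_univ, Subgroup.index_eq_card, Nat.card_eq_fintype_card]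
        omega



/-- Transfer a generating set of a subgroup to a generating set of the corresponding group. -/
theorem to_top {G : Type*} [Group G] {H : Subgroup G} {S : Finset G}
    (hS : Subgroup.closure (S : Set G) = H) :
    ∃ T : Finset ↥H, Subgroup.closure (T : Set ↥H) = ⊤ ∧ T.card ≤ S.card := by
  classical
  have hsub : ∀ x ∈ S, x ∈ H := fun x hx => hS ▸ Subgroup.subset_closure hx
  set V : Finset ↥H := S.attach.image fun x => (⟨x.1, hsub x.1 x.2⟩ : ↥H) with hV
  have himg : V.image (fun x : ↥H => (x : G)) = S := by
    rw [hV, Finset.image_image]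
    exact S.attach_image_val
  refine ⟨V, ?_, Finset.card_image_le.trans (by rw [Finset.card_attach])⟩
  apply Subgroup.map_injective H.subtype_injective
  rw [MonoidHom.map_closure]
  have himg' : H.subtype '' (V : Set ↥H) = (S : Set G) :=
    calc H.subtype '' (V : Set ↥H) = (fun x : ↥H => (x : G)) '' (V : Set ↥H) := rfl
      _ = ((V.image fun x : ↥H => (x : G)) : Set G) := (Finset.coe_image).symm
      _ = (S : Set G) := by rw [himg]
  rw [himg', hS, ← MonoidHom.range_eq_map, Subgroup.subtype_range]

end SchreierRefined

set_option maxHeartbeats 1000000 in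
theorem inter_genLE_of_finite_extension' {G : Type*} [Group G] (F : Subgroup G)
    (m : ℕ) (hm : 0 < m) (hindex : F.index = m)
    (n₁ n₂ : ℕ) (hn₁ : 1 ≤ n₁) (hn₂ : 1 ≤ n₂) (C : ℕ)
    (hC : ∀ K₁ K₂ : Subgroup G, K₁ ≤ F → K₂ ≤ F →
      (∃ S : Finset G, Subgroup.closure (S : Set G) = K₁ ∧ S.card ≤ m * (n₁ - 1) + 1) →
      (∃ S : Finset G, Subgroup.closure (S : Set G) = K₂ ∧ S.card ≤ m * (n₂ - 1) + 1) →
      (∃ S : Finset G, Subgroup.closure (S : Set G) = K₁ ⊓ K₂ ∧ S.card ≤ C)) :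
    ∀ H₁ H₂ : Subgroup G,
      (∃ S : Finset G, Subgroup.closure (S : Set G) = H₁ ∧ S.card ≤ n₁) →
      (∃ S : Finset G, Subgroup.closure (S : Set G) = H₂ ∧ S.card ≤ n₂) →
      (∃ S : Finset G, Subgroup.closure (S : Set G) = H₁ ⊓ H₂ ∧ S.card ≤ C + m - 1) := by
  classical
  intro H₁ H₂ h₁ h₂
  obtain ⟨S₁, hS₁, hc₁⟩ := h₁
  obtain ⟨S₂, hS₂, hc₂⟩ := h₂
  haveI hFfi : F.FiniteIndex := ⟨by rw [hindex]; omega⟩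
  -- generating sets of `F ⊓ Hᵢ` of controlled size
  have key : ∀ (H : Subgroup G) (S : Finset G) (n : ℕ), Subgroup.closure (S : Set G) = H →
      S.card ≤ n →
      ∃ V : Finset G, Subgroup.closure (V : Set G) = F ⊓ H ∧ V.card ≤ m * (n - 1) + 1 := by
    intro H S n hS hc
    obtain ⟨T, hTtop, hTc⟩ := SchreierRefined.to_top hS
    haveI : (F.subgroupOf H).FiniteIndex := inferInstance
    obtain ⟨T', hT', hT'c⟩ := SchreierRefined.schreier (F.subgroupOf H) hTtop
    have hidx : (F.subgroupOf H).index ≤ m := by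
      have h0 : F.relIndex ⊤ ≠ 0 := by
        rw [Subgroup.relIndex_top_right, hindex]; omega
      have := Subgroup.relIndex_le_of_le_right (le_top : H ≤ ⊤) h0
      rw [Subgroup.relIndex_top_right, hindex] at this
      exact this
    refine ⟨T'.image Subtype.val, ?_, ?_⟩
    · have h1 : Subgroup.map H.subtype (Subgroup.closure (T' : Set ↥H)) = F ⊓ H := by
        rw [hT', Subgroup.subgroupOf_map_subtype]
      rw [MonoidHom.map_closure] at h1
      rw [Finset.coe_image]
      exact h1
    · refine Finset.card_image_le.trans (hT'c.trans ?_)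
      have h1 : T.card - 1 ≤ n - 1 := Nat.sub_le_sub_right (hTc.trans hc) 1
      have := Nat.mul_le_mul hidx h1
      omega
  obtain ⟨V₁, hV₁, hV₁c⟩ := key H₁ S₁ n₁ hS₁ hc₁
  obtain ⟨V₂, hV₂, hV₂c⟩ := key H₂ S₂ n₂ hS₂ hc₂
  obtain ⟨W, hW, hWc⟩ := hC (F ⊓ H₁) (F ⊓ H₂) inf_le_left inf_le_left
    ⟨V₁, hV₁, hV₁c⟩ ⟨V₂, hV₂, hV₂c⟩
  set Hb := H₁ ⊓ H₂ with hHb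
  have hLeq : (F ⊓ H₁) ⊓ (F ⊓ H₂) = Hb ⊓ F := by
    rw [← inf_inf_distrib_left, inf_comm]
  rw [hLeq] at hW
  have hrel : ((Hb ⊓ F).subgroupOf Hb).index = F.relIndex Hb :=
    Subgroup.inf_relIndex_left Hb F
  haveI : ((Hb ⊓ F).subgroupOf Hb).FiniteIndex := by
    constructor
    rw [hrel]
    exact (Subgroup.instFiniteIndex_subgroupOf F Hb).index_ne_zero
  obtain ⟨T', hT', hT'c⟩ := SchreierRefined.extension_step (inf_le_left : Hb ⊓ F ≤ Hb) hW
  refine ⟨T', hT', ?_⟩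
  have he1 : ((Hb ⊓ F).subgroupOf Hb).index ≠ 0 := ‹((Hb ⊓ F).subgroupOf Hb).FiniteIndex›.index_ne_zero
  have he2 : ((Hb ⊓ F).subgroupOf Hb).index ≤ m := by
    rw [hrel]
    have h0 : F.relIndex ⊤ ≠ 0 := by
      rw [Subgroup.relIndex_top_right, hindex]; omega
    have := Subgroup.relIndex_le_of_le_right (le_top : Hb ≤ ⊤) h0
    rwa [Subgroup.relIndex_top_right, hindex] at this
  omega


/-- quantitative form of "a finite extension of a strongly Howson group is
strongly Howson". If `F ≤ G` has finite index `m`, `n₁, n₂ ≥ 1` and `C` bounds the number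
of generators of `K₁ ⊓ K₂` for all subgroups `K₁, K₂` of `F` generated by at most
`m(n₁−1)+1` and `m(n₂−1)+1` elements respectively, then for all subgroups `H₁, H₂` of `G`
generated by at most `n₁` and `n₂` elements respectively, `H₁ ⊓ H₂` is generated by at
most `C + m − 1` elements. -/
theorem inter_genLE_of_finite_extension {G : Type*} [Group G] (F : Subgroup G)
    (m : ℕ) (hm : 0 < m) (hindex : F.index = m)
    (n₁ n₂ : ℕ) (hn₁ : 1 ≤ n₁) (hn₂ : 1 ≤ n₂) (C : ℕ)
    (hC : ∀ K₁ K₂ : Subgroup G, K₁ ≤ F → K₂ ≤ F →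
      K₁.GenLE (m * (n₁ - 1) + 1) → K₂.GenLE (m * (n₂ - 1) + 1) → (K₁ ⊓ K₂).GenLE C) :
    ∀ H₁ H₂ : Subgroup G, H₁.GenLE n₁ → H₂.GenLE n₂ → (H₁ ⊓ H₂).GenLE (C + m - 1) := by
  exact inter_genLE_of_finite_extension' F m hm hindex n₁ n₂ hn₁ hn₂ C hC
end

section
/- Let G be a group with a subgroup P of finite index m, where P admits a subnormal series P = P_0 ⊳ P_1 ⊳ ... ⊳ P_n = {1} with all quotients P_{i−1}/P_i cyclic. Then for all subgroups H_1, H_2 of G, the intersection H_1 ∩ H_2 is generated by at most n + m − 1 elements. In particular, every virtually polycyclic group is strongly Howson with bounded intersection-rank function. -/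
/-- `c` is a subnormal series `G = c 0 ⊳ c 1 ⊳ … ⊳ c n = {1}` (each term normal in the
previous one) with all quotients cyclic. -/
def IsCyclicSeries {G : Type*} [Group G] (n : ℕ) (c : Fin (n + 1) → Subgroup G) : Prop :=
  c 0 = ⊤ ∧ c (Fin.last n) = ⊥ ∧
    ∀ i : Fin n, c i.succ ≤ c i.castSucc ∧
      ∃ _h : ((c i.succ).subgroupOf (c i.castSucc)).Normal,
        IsCyclic (↥(c i.castSucc) ⧸ (c i.succ).subgroupOf (c i.castSucc))

/-- If a finset `T` generates `K ⊓ ker φ` and the image of `K` under `φ` is generated by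
`φ u` with `u ∈ K`, then `insert u T` generates `K`. -/
lemma closure_insert_eq_of_ker {Q R : Type*} [Group Q] [Group R] [DecidableEq Q]
    (φ : Q →* R) (K : Subgroup Q)
    (T : Finset Q) (hTK : ↑T ⊆ (K : Set Q)) (hT : Subgroup.closure ↑T = K ⊓ φ.ker)
    (u : Q) (hu : u ∈ K) (hmap : K.map φ ≤ Subgroup.closure {φ u}) :
    Subgroup.closure (↑(insert u T) : Set Q) = K := by
  apply le_antisymm
  · rw [Subgroup.closure_le]
    intro x hx
    rcases Finset.mem_insert.mp (by exact_mod_cast hx) with h | h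
    · rw [h]; exact hu
    · exact hTK h
  · intro h hh
    have h1 : φ h ∈ Subgroup.closure {φ u} := hmap ⟨h, hh, rfl⟩
    rw [← Subgroup.zpowers_eq_closure, Subgroup.mem_zpowers_iff] at h1
    obtain ⟨j, hj⟩ := h1
    have huc : u ∈ Subgroup.closure (↑(insert u T) : Set Q) :=
      Subgroup.subset_closure (by simp)
    have h2 : h * (u ^ j)⁻¹ ∈ K ⊓ φ.ker := by
      refine Subgroup.mem_inf.mpr ⟨mul_mem hh (inv_mem (zpow_mem hu j)), ?_⟩
      rw [MonoidHom.mem_ker, map_mul, map_inv, map_zpow, hj]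
      group
    rw [← hT] at h2
    have h3 : h * (u ^ j)⁻¹ ∈ Subgroup.closure (↑(insert u T) : Set Q) :=
      Subgroup.closure_mono (by simp [Finset.coe_insert, Set.subset_insert]) h2
    have := mul_mem h3 (zpow_mem huc j)
    simpa using this

/-- Every subgroup of a group admitting a cyclic series of length `n` is generated by at
most `n` elements. -/
lemma polycyclic_subgroup_gen {Γ : Type*} [Group Γ] (n : ℕ) (c : Fin (n + 1) → Subgroup Γ)
    (hc : IsCyclicSeries n c) (K : Subgroup Γ) :
    ∃ S : Finset Γ, Subgroup.closure (S : Set Γ) = K ∧ S.card ≤ n := by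
  classical
  obtain ⟨h0, hlast, hstep⟩ := hc
  suffices H : ∀ i : Fin (n + 1), ∃ S : Finset Γ,
      Subgroup.closure (S : Set Γ) = K ⊓ c i ∧ S.card ≤ n - (i : ℕ) by
    obtain ⟨S, hS, hcard⟩ := H 0
    exact ⟨S, by simpa [h0] using hS, by simpa using hcard⟩
  intro i
  induction i using Fin.reverseInduction with
  | last =>
    refine ⟨∅, ?_, by simp⟩
    simp [hlast]
  | cast i ih =>
    obtain ⟨S, hS, hcard⟩ := ih
    obtain ⟨hle, hnorm, hcyc⟩ := hstep i
    set A := c i.castSucc with hA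
    set B := c i.succ with hB
    haveI := hnorm
    set φ : ↥A →* ↥A ⧸ B.subgroupOf A := QuotientGroup.mk' (B.subgroupOf A)
    have hKB_le : K ⊓ B ≤ A := le_trans inf_le_right hle
    have hSA : ∀ s ∈ S, s ∈ A := by
      intro s hs
      exact hKB_le (hS ▸ Subgroup.subset_closure hs)
    set T : Finset ↥A := S.attach.map
      ⟨fun x => ⟨x.1, hSA x.1 x.2⟩,
        fun a b h => Subtype.ext (congrArg Subtype.val h : (a : Γ) = b)⟩ with hT
    have hTcard : T.card = S.card := by simp [hT]
    have hTimageF : T.image A.subtype = S := by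
      ext x
      simp only [hT, Finset.mem_image, Finset.mem_map, Finset.mem_attach,
        Function.Embedding.coeFn_mk, true_and]
      constructor
      · rintro ⟨y, ⟨⟨s, hs⟩, rfl⟩, rfl⟩; exact hs
      · intro hx; exact ⟨⟨x, hSA x hx⟩, ⟨⟨x, hx⟩, rfl⟩, rfl⟩
    have hTimage : (A.subtype) '' (T : Set ↥A) = (S : Set Γ) := by
      rw [← Finset.coe_image, hTimageF]
    set K' := K.subgroupOf A with hK'
    have hTgen : Subgroup.closure (T : Set ↥A) = K' ⊓ φ.ker := by
      apply Subgroup.map_injective A.subtype_injective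
      rw [MonoidHom.map_closure, hTimage, hS]
      have hker : φ.ker = B.subgroupOf A := QuotientGroup.ker_mk' _
      rw [hker, hK',
        show K.subgroupOf A ⊓ B.subgroupOf A = (K ⊓ B).subgroupOf A from rfl,
        Subgroup.subgroupOf_map_subtype]
      exact (inf_eq_left.mpr hKB_le).symm
    have hTK : (T : Set ↥A) ⊆ (K' : Set ↥A) := by
      intro x hx
      exact (hTgen ▸ Subgroup.subset_closure hx).1
    haveI : IsCyclic (↥A ⧸ B.subgroupOf A) := hcyc
    obtain ⟨g, hg⟩ := IsCyclic.exists_generator (α := ↥(K'.map φ))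
    obtain ⟨u, hu, hug⟩ := g.2
    have hmap : K'.map φ ≤ Subgroup.closure {φ u} := by
      intro x hx
      obtain ⟨j, hj⟩ := hg ⟨x, hx⟩
      have : x = (φ u) ^ j := by
        have := congrArg Subtype.val hj
        simpa [hug] using this.symm
      rw [this, ← Subgroup.zpowers_eq_closure]
      exact zpow_mem (Subgroup.mem_zpowers _) j
    have hgenA : Subgroup.closure (↑(insert u T) : Set ↥A) = K' :=
      closure_insert_eq_of_ker φ K' T hTK hTgen u hu hmap
    refine ⟨(insert u T).image A.subtype, ?_, ?_⟩
    · rw [Finset.coe_image, ← MonoidHom.map_closure, hgenA, hK',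
        Subgroup.subgroupOf_map_subtype]
    · calc ((insert u T).image A.subtype).card ≤ (insert u T).card := Finset.card_image_le
        _ ≤ T.card + 1 := Finset.card_insert_le _ _
        _ = S.card + 1 := by rw [hTcard]
        _ ≤ n - ((i : ℕ) + 1) + 1 := by
            have h' : (i.succ : ℕ) = (i : ℕ) + 1 := rfl
            exact Nat.add_le_add_right (by rw [← h']; exact hcard) 1
        _ ≤ n - (i.castSucc : ℕ) := by
            have hi : (i : ℕ) < n := i.2
            simp only [Fin.coe_castSucc]
            omega

/-- if `G` has a subgroup `P` of finite index `m` and `P` admits a subnormal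
series of length `n` with cyclic quotients (i.e. `P` is polycyclic), then for all
subgroups `H₁, H₂` of `G` the intersection `H₁ ⊓ H₂` is generated by at most `n + m − 1`
elements. In particular every virtually polycyclic group is strongly Howson with bounded
intersection-rank function. -/
theorem inter_genLE_of_virtually_polycyclic {G : Type*} [Group G] (P : Subgroup G)
    (m : ℕ) (hm : 0 < m) (hindex : P.index = m)
    (n : ℕ) (c : Fin (n + 1) → Subgroup ↥P) (hc : IsCyclicSeries n c)
    (H₁ H₂ : Subgroup G) :
    ∃ S : Finset G, Subgroup.closure (S : Set G) = H₁ ⊓ H₂ ∧ S.card ≤ n + m - 1 := by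
  classical
  set K : Subgroup G := H₁ ⊓ H₂ with hK
  -- generators for K ⊓ P
  obtain ⟨T, hTgen, hTcard⟩ := polycyclic_subgroup_gen n c hc (K.subgroupOf P)
  set S₁ : Finset G := T.image P.subtype with hS₁
  have hS₁gen : Subgroup.closure (S₁ : Set G) = K ⊓ P := by
    rw [hS₁, Finset.coe_image, ← MonoidHom.map_closure, hTgen,
      Subgroup.subgroupOf_map_subtype]
  have hS₁card : S₁.card ≤ n := le_trans Finset.card_image_le hTcard
  -- coset representatives
  set M : Subgroup ↥K := P.subgroupOf K with hM
  have hMindex : M.index = P.relIndex K := rfl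
  have hrne : P.relIndex K ≠ 0 := by
    intro h
    have := Subgroup.relIndex_eq_zero_of_le_right le_top h
    rw [Subgroup.relIndex_top_right, hindex] at this
    omega
  have hrle : P.relIndex K ≤ m := by
    have := Subgroup.relIndex_le_of_le_right (H := P) (K := K) le_top
      (by rw [Subgroup.relIndex_top_right, hindex]; omega)
    rwa [Subgroup.relIndex_top_right, hindex] at this
  haveI hfin : Finite (↥K ⧸ M) := by
    have : Nat.card (↥K ⧸ M) ≠ 0 := hrne
    exact (Nat.card_ne_zero.mp this).2
  haveI := Fintype.ofFinite (↥K ⧸ M)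
  set qone : ↥K ⧸ M := QuotientGroup.mk 1 with hqone
  set f : (↥K ⧸ M) → ↥K := fun q => if q = qone then 1 else Quotient.out q with hf
  have hfmk : ∀ q : ↥K ⧸ M, QuotientGroup.mk (f q) = q := by
    intro q
    by_cases h : q = qone
    · rw [h, hf]; simp [hqone]
    · simp only [hf, if_neg h]
      exact QuotientGroup.out_eq' q
  set U₀ : Finset ↥K := (Finset.univ.image f).erase 1 with hU₀
  set U : Finset G := U₀.image K.subtype with hU
  have hUcard : U.card ≤ m - 1 := by
    have h1 : (1 : ↥K) ∈ Finset.univ.image f := by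
      refine Finset.mem_image.mpr ⟨qone, Finset.mem_univ _, ?_⟩
      simp [hf]
    calc U.card ≤ U₀.card := Finset.card_image_le
      _ = (Finset.univ.image f).card - 1 := Finset.card_erase_of_mem h1
      _ ≤ Fintype.card (↥K ⧸ M) - 1 := by
          have := Finset.card_image_le (s := (Finset.univ : Finset (↥K ⧸ M))) (f := f)
          simp only [Finset.card_univ] at this
          omega
      _ ≤ m - 1 := by
          have : Fintype.card (↥K ⧸ M) = M.index := by
            rw [Subgroup.index, Nat.card_eq_fintype_card]
          omega
  refine ⟨S₁ ∪ U, ?_, ?_⟩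
  · apply le_antisymm
    · rw [Subgroup.closure_le]
      intro x hx
      rcases Finset.mem_union.mp (by exact_mod_cast hx) with h | h
      · have : x ∈ K ⊓ P := hS₁gen ▸ Subgroup.subset_closure (by exact_mod_cast h)
        exact this.1
      · obtain ⟨y, _, rfl⟩ := Finset.mem_image.mp h
        exact y.2
    · intro k hk
      set x : ↥K := ⟨k, hk⟩ with hx
      set q : ↥K ⧸ M := QuotientGroup.mk x with hq
      set r : ↥K := f q with hr
      have hrx : (r : G)⁻¹ * k ∈ K ⊓ P := by
        have : QuotientGroup.mk r = QuotientGroup.mk x := (hfmk q).trans hq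
        have hmem : r⁻¹ * x ∈ M := (QuotientGroup.eq ).mp this
        exact ⟨(r⁻¹ * x).2, hmem⟩
      have hrcl : (r : G) ∈ Subgroup.closure ((S₁ ∪ U : Finset G) : Set G) := by
        by_cases h1 : r = 1
        · rw [h1]; exact one_mem _
        · apply Subgroup.subset_closure
          refine Finset.mem_coe.mpr (Finset.mem_union_right _ ?_)
          refine Finset.mem_image.mpr ⟨r, ?_, rfl⟩
          exact Finset.mem_erase.mpr ⟨h1, Finset.mem_image.mpr ⟨q, Finset.mem_univ _, rfl⟩⟩
      have hwcl : (r : G)⁻¹ * k ∈ Subgroup.closure ((S₁ ∪ U : Finset G) : Set G) := by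
        have : (r : G)⁻¹ * k ∈ Subgroup.closure (S₁ : Set G) := hS₁gen ▸ hrx
        exact Subgroup.closure_mono (by simp [Finset.coe_union, Set.subset_union_left]) this
      have := mul_mem hrcl hwcl
      simpa using this
  · calc (S₁ ∪ U).card ≤ S₁.card + U.card := Finset.card_union_le _ _
      _ ≤ n + (m - 1) := Nat.add_le_add hS₁card hUcard
      _ = n + m - 1 := by omega
end

section
/- Let N be a nilpotent group of nilpotency class at most n that is generated by k elements, where k ≥ 2. Then every subgroup H of N is generated by at most (k^{n+1} − k)/(k − 1) elements (equivalently, at most k + k² + ... + k^n elements). -/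
open Subgroup
open scoped commutatorElement

section CommFS
section
variable {N : Type*} [Group N] [DecidableEq N]

def commFS (T : Finset N) : ℕ → Finset N
  | 0 => T
  | (i+1) => (commFS T i ×ˢ T).image fun p => ⁅p.1, p.2⁆

lemma commFS_subset_lcs (T : Finset N) :
    ∀ i, (commFS T i : Set N) ⊆ ((⊤ : Subgroup N).lowerCentralSeries i : Set N)
  | 0 => by simp [commFS]
  | (i+1) => by
      intro x hx
      simp only [commFS, Finset.coe_image, Set.mem_image] at hx
      obtain ⟨⟨a, t⟩, hmem, rfl⟩ := hx
      rw [Finset.mem_coe, Finset.mem_product] at hmem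
      exact Subgroup.commutator_mem_commutator
        (commFS_subset_lcs T i hmem.1) (Subgroup.mem_top t)

lemma commFS_card {N : Type*} [Group N] [DecidableEq N] (T : Finset N) {k : ℕ}
    (hT : T.card ≤ k) : ∀ i, (commFS T i).card ≤ k ^ (i + 1)
  | 0 => by simpa [commFS] using hT.trans (le_of_eq (pow_one k).symm)
  | (i+1) => by
      calc (commFS T (i+1)).card ≤ ((commFS T i) ×ˢ T).card := Finset.card_image_le
        _ = (commFS T i).card * T.card := Finset.card_product _ _
        _ ≤ k ^ (i+1) * k := Nat.mul_le_mul (commFS_card T hT i) hT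
        _ = k ^ (i+2) := by ring

lemma map_top_surj {G G' : Type*} [Group G] [Group G'] (f : G →* G')
    (hf : Function.Surjective f) : Subgroup.map f ⊤ = ⊤ := by
  rw [← MonoidHom.range_eq_map]; exact MonoidHom.range_eq_top.2 hf

lemma lcs_succ_def {G : Type*} [Group G] (i : ℕ) :
    (⊤ : Subgroup G).lowerCentralSeries (i+1) = ⁅(⊤ : Subgroup G).lowerCentralSeries i, (⊤ : Subgroup G)⁆ := rfl

lemma lcs_map_surj {G G' : Type*} [Group G] [Group G'] (f : G →* G')
    (hf : Function.Surjective f) (i : ℕ) :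
    ((⊤ : Subgroup G).lowerCentralSeries i).map f = (⊤ : Subgroup G').lowerCentralSeries i := by
  induction i with
  | zero => exact map_top_surj f hf
  | succ i ih =>
      rw [lcs_succ_def, lcs_succ_def, Subgroup.map_commutator, ih, map_top_surj f hf]

lemma comm_central_closure {G : Type*} [Group G] (X Y : Set G)
    (hc : ⁅Subgroup.closure X, Subgroup.closure Y⁆ ≤ Subgroup.center G) :
    ⁅Subgroup.closure X, Subgroup.closure Y⁆ ≤
      Subgroup.closure ((fun p : G × G => ⁅p.1, p.2⁆) '' (X ×ˢ Y)) := by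
  set W := Subgroup.closure ((fun p : G × G => ⁅p.1, p.2⁆) '' (X ×ˢ Y)) with hW
  have key : ∀ p ∈ Subgroup.closure X, ∀ q ∈ Subgroup.closure Y, ⁅p, q⁆ ∈ W := by
    have hcent : ∀ p ∈ Subgroup.closure X, ∀ q ∈ Subgroup.closure Y, ∀ g : G,
        g * ⁅p, q⁆ * g⁻¹ = ⁅p, q⁆ := by
      intro p hp q hq g
      have := hc (Subgroup.commutator_mem_commutator hp hq)
      rw [Subgroup.mem_center_iff] at this
      rw [this g, mul_assoc, mul_inv_cancel, mul_one]
    intro p hp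
    induction hp using Subgroup.closure_induction with
    | mem x hx =>
        intro q hq
        induction hq using Subgroup.closure_induction with
        | mem y hy => exact subset_closure ⟨(x, y), ⟨hx, hy⟩, rfl⟩
        | one => simpa using one_mem W
        | mul a b ha hb iha ihb =>
            have h1 : ⁅x, a * b⁆ = ⁅x, a⁆ * (a * ⁅x, b⁆ * a⁻¹) := by group
            rw [h1, hcent x (subset_closure hx) b hb a]
            exact mul_mem iha ihb
        | inv a ha iha =>
            have h1 : ⁅x, a⁻¹⁆ = a⁻¹ * ⁅x, a⁆⁻¹ * a := by group
            rw [h1]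
            have := hcent x (subset_closure hx) a ha a⁻¹
            rw [inv_inv] at this
            rw [show a⁻¹ * ⁅x, a⁆⁻¹ * a = (a⁻¹ * ⁅x, a⁆ * a)⁻¹ by group, this]
            exact inv_mem iha
    | one => intro q hq; simpa using one_mem W
    | mul a b ha hb iha ihb =>
        intro q hq
        have h1 : ⁅a * b, q⁆ = (a * ⁅b, q⁆ * a⁻¹) * ⁅a, q⁆ := by group
        rw [h1, hcent b hb q hq a]
        exact mul_mem (ihb q hq) (iha q hq)
    | inv a ha iha =>
        intro q hq
        have h1 : ⁅a⁻¹, q⁆ = a⁻¹ * ⁅a, q⁆⁻¹ * a := by group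
        rw [h1]
        have := hcent a ha q hq a⁻¹
        rw [inv_inv] at this
        rw [show a⁻¹ * ⁅a, q⁆⁻¹ * a = (a⁻¹ * ⁅a, q⁆ * a)⁻¹ by group, this]
        exact inv_mem (iha q hq)
  exact Subgroup.commutator_le.2 key

lemma lcs_le_closure (T : Finset N) (hT : Subgroup.closure (T : Set N) = ⊤) :
    ∀ i, (⊤ : Subgroup N).lowerCentralSeries i ≤
      Subgroup.closure ↑(commFS T i) ⊔ (⊤ : Subgroup N).lowerCentralSeries (i+1)
  | 0 => by
      rw [Subgroup.lowerCentralSeries_zero, ← hT]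
      exact le_sup_of_le_left (le_of_eq rfl)
  | (i+1) => by
      set K := (⊤ : Subgroup N).lowerCentralSeries (i+2) with hK
      let π : N →* N ⧸ K := QuotientGroup.mk' K
      have hsurj : Function.Surjective π := QuotientGroup.mk'_surjective K
      have hmapK : Subgroup.map π K = ⊥ := by
        rw [eq_bot_iff]
        rintro x ⟨y, hy, rfl⟩
        exact Subgroup.mem_bot.2 ((QuotientGroup.eq_one_iff y).2 hy)
      have hqtriv : (⊤ : Subgroup (N ⧸ K)).lowerCentralSeries (i+2) = ⊥ := by
        rw [← lcs_map_surj π hsurj]; exact hmapK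
      have hcentral : (⊤ : Subgroup (N ⧸ K)).lowerCentralSeries (i+1) ≤ Subgroup.center (N ⧸ K) := by
        rw [← Subgroup.centralizer_univ, ← Subgroup.coe_top]
        exact Subgroup.commutator_eq_bot_iff_le_centralizer.1 (by rw [← lcs_succ_def]; exact hqtriv)
      have hY : Subgroup.closure (π '' (T : Set N)) = ⊤ := by
        rw [← MonoidHom.map_closure, hT, map_top_surj π hsurj]
      have hA : (⊤ : Subgroup (N ⧸ K)).lowerCentralSeries i =
          Subgroup.closure ((π '' ↑(commFS T i)) ∪ ((⊤ : Subgroup (N ⧸ K)).lowerCentralSeries (i+1) : Set (N ⧸ K))) := by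
        apply le_antisymm
        · rw [← lcs_map_surj π hsurj i]
          calc Subgroup.map π ((⊤ : Subgroup N).lowerCentralSeries i)
              ≤ Subgroup.map π (Subgroup.closure ↑(commFS T i) ⊔ (⊤ : Subgroup N).lowerCentralSeries (i+1)) :=
                Subgroup.map_mono (lcs_le_closure T hT i)
            _ = Subgroup.closure (π '' ↑(commFS T i)) ⊔ (⊤ : Subgroup (N ⧸ K)).lowerCentralSeries (i+1) := by
                rw [Subgroup.map_sup, MonoidHom.map_closure, lcs_map_surj π hsurj]
            _ = _ := by rw [Subgroup.closure_union, Subgroup.closure_eq]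
        · rw [Subgroup.closure_le]
          apply Set.union_subset
          · rw [← lcs_map_surj π hsurj i]
            exact Set.image_subset_iff.2 fun x hx =>
              Set.mem_image_of_mem π (commFS_subset_lcs T i hx)
          · exact fun x hx => Subgroup.lowerCentralSeries_antitone _ (Nat.le_succ i) hx
      have h2 : (⊤ : Subgroup (N ⧸ K)).lowerCentralSeries (i+1) ≤
          Subgroup.map π (Subgroup.closure ↑(commFS T (i+1))) := by
        have hc : ⁅Subgroup.closure ((π '' ↑(commFS T i)) ∪ ((⊤ : Subgroup (N ⧸ K)).lowerCentralSeries (i+1) : Set (N ⧸ K))),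
            Subgroup.closure (π '' (T : Set N))⁆ ≤ Subgroup.center (N ⧸ K) := by
          rw [← hA, hY, ← lcs_succ_def]; exact hcentral
        have h3 := comm_central_closure _ _ hc
        rw [← hA, hY, ← lcs_succ_def] at h3
        refine h3.trans ?_
        rw [Subgroup.closure_le, MonoidHom.map_closure]
        rintro z ⟨⟨x, y⟩, ⟨hx, hy⟩, rfl⟩
        rcases hx with hx | hx
        · obtain ⟨a, ha, rfl⟩ := hx
          obtain ⟨t, ht, rfl⟩ := hy
          show ⁅π a, π t⁆ ∈ _
          rw [(map_commutatorElement π a t).symm]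
          apply Subgroup.subset_closure
          apply Set.mem_image_of_mem
          simp only [commFS, Finset.coe_image, Finset.coe_product]
          refine Set.mem_image_of_mem _ (show (a, t) ∈ (commFS T i : Set N) ×ˢ (T : Set N) from ⟨ha, ht⟩)
        · have hcx : x ∈ Subgroup.center (N ⧸ K) := hcentral hx
          have h1 : ⁅x, y⁆ = 1 := by
            rw [commutatorElement_def]
            rw [Subgroup.mem_center_iff] at hcx
            rw [← hcx y]
            group
          show ⁅x, y⁆ ∈ _
          rw [h1]; exact Subgroup.one_mem _
      calc (⊤ : Subgroup N).lowerCentralSeries (i+1)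
          ≤ Subgroup.comap π ((⊤ : Subgroup (N ⧸ K)).lowerCentralSeries (i+1)) := by
            rw [← lcs_map_surj π hsurj (i+1)]; exact Subgroup.le_comap_map _ _
        _ ≤ Subgroup.comap π (Subgroup.map π (Subgroup.closure ↑(commFS T (i+1)))) :=
            Subgroup.comap_mono h2
        _ = Subgroup.closure ↑(commFS T (i+1)) ⊔ K := by
            rw [Subgroup.comap_map_eq, QuotientGroup.ker_mk' K]
end



lemma toAddSubgroup_closure {G : Type*} [Group G] (s : Set G) :
    Subgroup.toAddSubgroup (Subgroup.closure s) =
      AddSubgroup.closure (show Set (Additive G) from s) := by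
  symm
  apply AddSubgroup.closure_eq_of_le
  · intro x hx
    exact Subgroup.subset_closure (G := G) hx
  · intro x hx
    have hx' : Additive.toMul x ∈ Subgroup.closure s := hx
    exact Subgroup.closure_induction
      (p := fun g _ => Additive.ofMul g ∈ AddSubgroup.closure (show Set (Additive G) from s))
      (fun y hy => AddSubgroup.subset_closure hy)
      (AddSubgroup.zero_mem _)
      (fun a b _ _ iha ihb => AddSubgroup.add_mem _ iha ihb)
      (fun a _ iha => AddSubgroup.neg_mem _ iha) hx'

lemma comm_group_subgroup_gen {A : Type*} [CommGroup A] (X : Finset A)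
    (hX : Subgroup.closure (X : Set A) = ⊤) (H : Subgroup A) :
    ∃ S : Finset A, Subgroup.closure (S : Set A) = H ∧ S.card ≤ X.card := by
  classical
  let M := Additive A
  let v : {x : A // x ∈ X} → M := fun x => Additive.ofMul (x : A)
  let f : ({x : A // x ∈ X} → ℤ) →ₗ[ℤ] M := Fintype.linearCombination ℤ v
  have hrange : LinearMap.range f = Submodule.span ℤ (Set.range v) :=
    Fintype.range_linearCombination ℤ v
  have hsets : Set.range v = (show Set M from (X : Set A)) := by
    ext y
    constructor
    · rintro ⟨⟨z, hz⟩, rfl⟩; exact hz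
    · intro hy; exact ⟨⟨y, hy⟩, rfl⟩
  let Hs : Submodule ℤ M := AddSubgroup.toIntSubmodule (Subgroup.toAddSubgroup H)
  have hHle : Hs ≤ LinearMap.range f := by
    rw [hrange]
    intro x hx
    have hx' : x ∈ AddSubgroup.closure (show Set M from (X : Set A)) := by
      rw [← _root_.toAddSubgroup_closure, hX]
      trivial
    rw [← hsets] at hx'
    rw [← Submodule.span_int_eq_addSubgroupClosure] at hx'
    exact hx'
  let K : Submodule ℤ ({x : A // x ∈ X} → ℤ) := Submodule.comap f Hs
  obtain ⟨m, bK⟩ := Submodule.basisOfPid (Pi.basisFun ℤ {x : A // x ∈ X}) K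
  have hm : m ≤ X.card := by
    have := Module.Basis.card_le_card_of_submodule K (Pi.basisFun ℤ {x : A // x ∈ X}) bK
    simpa using this
  have hmapK : Submodule.map f K = Hs := by
    rw [Submodule.map_comap_eq, inf_eq_right.2 hHle]
  set w : Fin m → M := fun i => f (bK i) with hw
  have h1 : Submodule.span ℤ (Set.range fun i => (bK i : {x : A // x ∈ X} → ℤ)) = K := by
    rw [show (Set.range fun i => (bK i : {x : A // x ∈ X} → ℤ))
        = K.subtype '' Set.range bK by rw [← Set.range_comp]; rfl,
      ← Submodule.map_span, bK.span_eq, Submodule.map_top, Submodule.range_subtype]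
  have hspan : Hs = Submodule.span ℤ (Set.range w) := by
    rw [← hmapK, ← h1, Submodule.map_span, ← Set.range_comp]
    rfl
  let S : Finset A := Finset.image (fun i : Fin m => Additive.toMul (w i)) Finset.univ
  have hScoe : (show Set M from (S : Set A)) = Set.range w := by
    ext y
    simp only [S, Finset.coe_image, Finset.coe_univ, Set.image_univ]
    constructor
    · rintro ⟨i, rfl⟩; exact ⟨i, rfl⟩
    · rintro ⟨i, rfl⟩; exact ⟨i, rfl⟩
  refine ⟨S, ?_, ?_⟩
  · apply Subgroup.toAddSubgroup.injective
    rw [_root_.toAddSubgroup_closure, hScoe, ← Submodule.span_int_eq_addSubgroupClosure, ← hspan]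
    exact AddSubgroup.toIntSubmodule_toAddSubgroup _
  · calc S.card ≤ Finset.univ.card := Finset.card_image_le
      _ = m := by simp
      _ ≤ X.card := hm


lemma central_subgroup_gen {G : Type*} [Group G] (Z : Subgroup G) (hZ : Z ≤ Subgroup.center G)
    (X : Finset G) (hX : Subgroup.closure (X : Set G) = Z) (H : Subgroup G) (hH : H ≤ Z) :
    ∃ S : Finset G, Subgroup.closure (S : Set G) = H ∧ S.card ≤ X.card := by
  classical
  letI : CommGroup ↥Z :=
    { (inferInstance : Group ↥Z) with
      mul_comm := fun a b =>
        Subtype.ext (Subgroup.mem_center_iff.mp (hZ b.2) (a : G)) }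
  have hXZ : ∀ x ∈ X, x ∈ Z := fun x hx => hX ▸ Subgroup.subset_closure hx
  let X' : Finset ↥Z := X.attach.image fun x => (⟨x.1, hXZ x.1 x.2⟩ : ↥Z)
  have hX'card : X'.card ≤ X.card :=
    Finset.card_image_le.trans (by simp)
  have hX'coe : Z.subtype '' (X' : Set ↥Z) = (X : Set G) := by
    ext y
    simp only [X', Finset.coe_image, Set.mem_image, Finset.mem_coe, Finset.mem_image]
    constructor
    · rintro ⟨z, ⟨x, -, rfl⟩, rfl⟩; exact x.2
    · intro hy; exact ⟨⟨y, hXZ y hy⟩, ⟨⟨y, hy⟩, Finset.mem_attach _ _, rfl⟩, rfl⟩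
  have hclos : Subgroup.closure (X' : Set ↥Z) = ⊤ := by
    apply Subgroup.map_injective Z.subtype_injective
    rw [MonoidHom.map_closure, hX'coe, hX, ← MonoidHom.range_eq_map, Subgroup.range_subtype]
  obtain ⟨S', hS'1, hS'2⟩ := comm_group_subgroup_gen X' hclos (H.subgroupOf Z)
  refine ⟨S'.image Z.subtype, ?_, Finset.card_image_le.trans (hS'2.trans hX'card)⟩
  rw [Finset.coe_image, ← MonoidHom.map_closure, hS'1, Subgroup.subgroupOf_map_subtype,
    inf_eq_left.2 hH]

universe u

lemma main_induction (k : ℕ) :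
    ∀ (n : ℕ) (N : Type u) [Group N], (⊤ : Subgroup N).lowerCentralSeries n = ⊥ →
      ∀ (T : Finset N), Subgroup.closure (T : Set N) = ⊤ → T.card ≤ k → ∀ (H : Subgroup N),
      ∃ S : Finset N, Subgroup.closure (S : Set N) = H ∧
        S.card ≤ ∑ i ∈ Finset.range n, k ^ (i+1) := by
  intro n
  induction n with
  | zero =>
      intro N _ hnil T hT hTc H
      refine ⟨∅, ?_, by simp⟩
      rw [Finset.coe_empty, Subgroup.closure_empty]
      have : H ≤ ⊥ := by
        rw [← hnil, Subgroup.lowerCentralSeries_zero]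
        exact le_top
      exact (le_bot_iff.mp this).symm
  | succ n ih =>
      intro N _ hnil T hT hTc H
      classical
      set Z := (⊤ : Subgroup N).lowerCentralSeries n with hZdef
      have hZtriv : ⁅Z, (⊤ : Subgroup N)⁆ = ⊥ := by rw [← lcs_succ_def]; exact hnil
      have hZcent : Z ≤ Subgroup.center N := by
        rw [← Subgroup.centralizer_univ, ← Subgroup.coe_top]
        exact Subgroup.commutator_eq_bot_iff_le_centralizer.1 hZtriv
      have hZgen : Subgroup.closure ((commFS T n : Finset N) : Set N) = Z := by
        apply le_antisymm
        · rw [Subgroup.closure_le]; exact commFS_subset_lcs T n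
        · have := lcs_le_closure T hT n
          rwa [hnil, sup_bot_eq] at this
      -- the abelian part
      obtain ⟨S₂, hS₂1, hS₂2⟩ := central_subgroup_gen Z hZcent (commFS T n) hZgen
        (H ⊓ Z) inf_le_right
      have hS₂k : S₂.card ≤ k ^ (n+1) := hS₂2.trans (commFS_card T hTc n)
      -- the quotient part
      let π : N →* N ⧸ Z := QuotientGroup.mk' Z
      have hsurj : Function.Surjective π := QuotientGroup.mk'_surjective Z
      have hQnil : (⊤ : Subgroup (N ⧸ Z)).lowerCentralSeries n = ⊥ := by
        rw [← lcs_map_surj π hsurj, eq_bot_iff]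
        rintro x ⟨y, hy, rfl⟩
        exact Subgroup.mem_bot.2 ((QuotientGroup.eq_one_iff y).2 hy)
      have hT' : Subgroup.closure ((T.image π : Finset (N ⧸ Z)) : Set (N ⧸ Z)) = ⊤ := by
        rw [Finset.coe_image, ← MonoidHom.map_closure, hT, map_top_surj π hsurj]
      obtain ⟨S₁', hS₁'1, hS₁'2⟩ := ih (N ⧸ Z) hQnil (T.image π) hT'
        (Finset.card_image_le.trans hTc) (H.map π)
      -- lift the quotient generators
      have hlift : ∀ q ∈ S₁', ∃ h, h ∈ H ∧ π h = q := by
        intro q hq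
        have : q ∈ H.map π := hS₁'1 ▸ Subgroup.subset_closure hq
        obtain ⟨h, hh, rfl⟩ := this
        exact ⟨h, hh, rfl⟩
      choose! g hg1 hg2 using hlift
      let S₁ : Finset N := S₁'.image g
      have hS₁H : (S₁ : Set N) ⊆ (H : Set N) := by
        intro x hx
        simp only [S₁, Finset.coe_image, Set.mem_image, Finset.mem_coe] at hx
        obtain ⟨q, hq, rfl⟩ := hx
        exact hg1 q hq
      have hπS₁ : π '' (S₁ : Set N) = (S₁' : Set (N ⧸ Z)) := by
        ext y
        simp only [S₁, Finset.coe_image, Set.mem_image, Finset.mem_coe]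
        constructor
        · rintro ⟨x, ⟨q, hq, rfl⟩, rfl⟩
          rw [hg2 q hq]; exact hq
        · intro hy; exact ⟨g y, ⟨y, hy, rfl⟩, hg2 y hy⟩
      refine ⟨S₁ ∪ S₂, ?_, ?_⟩
      · apply le_antisymm
        · rw [Subgroup.closure_le, Finset.coe_union]
          apply Set.union_subset hS₁H
          intro x hx
          exact inf_le_left (a := H) (b := Z) (hS₂1 ▸ Subgroup.subset_closure hx)
        · intro h hh
          have hπh : π h ∈ Subgroup.map π (Subgroup.closure (S₁ : Set N)) := by
            rw [MonoidHom.map_closure, hπS₁, hS₁'1]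
            exact Subgroup.mem_map_of_mem π hh
          obtain ⟨x, hx, hxh⟩ := hπh
          have hxH : x ∈ H := (Subgroup.closure_le H).mpr hS₁H hx
          have hmem : h * x⁻¹ ∈ H ⊓ Z := by
            refine Subgroup.mem_inf.2 ⟨mul_mem hh (inv_mem hxH), ?_⟩
            have : π (h * x⁻¹) = 1 := by
              rw [map_mul, map_inv, hxh]
              group
            exact (QuotientGroup.eq_one_iff _).1 this
          have h1 : h * x⁻¹ ∈ Subgroup.closure ((S₁ ∪ S₂ : Finset N) : Set N) := by
            rw [← hS₂1] at hmem
            refine Subgroup.closure_mono ?_ hmem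
            rw [Finset.coe_union]; exact Set.subset_union_right
          have h2 : x ∈ Subgroup.closure ((S₁ ∪ S₂ : Finset N) : Set N) := by
            refine Subgroup.closure_mono ?_ hx
            rw [Finset.coe_union]; exact Set.subset_union_left
          have := mul_mem h1 h2
          rwa [inv_mul_cancel_right] at this
      · calc (S₁ ∪ S₂).card ≤ S₁.card + S₂.card := Finset.card_union_le _ _
          _ ≤ S₁'.card + k ^ (n+1) := Nat.add_le_add Finset.card_image_le hS₂k
          _ ≤ (∑ i ∈ Finset.range n, k ^ (i+1)) + k ^ (n+1) := Nat.add_le_add_right hS₁'2 _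
          _ = ∑ i ∈ Finset.range (n+1), k ^ (i+1) := (Finset.sum_range_succ _ _).symm


lemma geom_sum_eq_div {k : ℕ} (hk : 2 ≤ k) (n : ℕ) :
    ∑ i ∈ Finset.range n, k ^ (i+1) = (k ^ (n + 1) - k) / (k - 1) := by
  have hle : k ≤ k ^ (n+1) := Nat.le_self_pow (Nat.succ_ne_zero n) k
  have key : (∑ i ∈ Finset.range n, k ^ (i+1)) * (k - 1) = k ^ (n+1) - k := by
    have hcast : ∀ m : ℕ, ((∑ i ∈ Finset.range m, k ^ (i+1) : ℕ) : ℤ) * ((k : ℤ) - 1)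
        = (k : ℤ) ^ (m+1) - k := by
      intro m
      induction m with
      | zero => simp
      | succ m ihm =>
          rw [Finset.sum_range_succ]
          push_cast at ihm ⊢
          linear_combination ihm
    have h1 : ((k:ℤ) - 1) = ((k - 1 : ℕ) : ℤ) := by
      have : (1:ℕ) ≤ k := by omega
      push_cast [Nat.cast_sub this]
      ring
    have h2 : ((k:ℤ) ^ (n+1) - k) = ((k ^ (n+1) - k : ℕ) : ℤ) := by
      push_cast [Nat.cast_sub hle]
      ring
    have hcast := hcast n
    rw [h1, h2] at hcast
    exact_mod_cast hcast
  rw [← key]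
  rw [Nat.mul_div_cancel _ (by omega : 0 < k - 1)]


/-- if `N` is a nilpotent group of nilpotency class at most `n`
(i.e. the `n`-th term of its lower central series is trivial) generated by `k ≥ 2`
elements, then every subgroup `H` of `N` is generated by at most
`(k^(n+1) − k)/(k − 1) = k + k² + … + kⁿ` elements. -/
theorem subgroup_genLE_of_nilpotent {N : Type*} [Group N] (n : ℕ)
    (hnil : (⊤ : Subgroup N).lowerCentralSeries n = ⊥) (k : ℕ) (hk : 2 ≤ k)
    (T : Finset N) (hT : Subgroup.closure (T : Set N) = ⊤) (hTcard : T.card ≤ k)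
    (H : Subgroup N) :
    ∃ S : Finset N, Subgroup.closure (S : Set N) = H ∧
      S.card ≤ (k ^ (n + 1) - k) / (k - 1) := by
  obtain ⟨S, hS1, hS2⟩ := main_induction k n N hnil T hT hTcard H
  exact ⟨S, hS1, hS2.trans (le_of_eq (geom_sum_eq_div hk n))⟩
end CommFS
end

section
/- Let N be a nilpotent group of nilpotency class at most n that is generated by k elements, where k ≥ 2. Then N admits a subnormal series N = M_0 ⊳ M_1 ⊳ ... ⊳ M_s = {1} (each M_i normal in M_{i−1}) with all quotients M_{i−1}/M_i cyclic, of length s = (k^{n+1} − k)/(k − 1) = k + k² + ... + k^n. In particular, every finitely generated nilpotent group is polycyclic. -/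
section Aux

open scoped commutatorElement

variable {N : Type*} [Group N]

/-- A single step of a cyclic series. -/
def CycStep (A B : Subgroup N) : Prop :=
  B ≤ A ∧ ∃ _h : (B.subgroupOf A).Normal, IsCyclic (↥A ⧸ B.subgroupOf A)

lemma cycStep_self (A : Subgroup N) : CycStep A A := by
  have hn : (A.subgroupOf A).Normal := by rw [Subgroup.subgroupOf_self]; infer_instance
  letI := hn
  refine ⟨le_rfl, hn, ?_⟩
  refine ⟨1, fun x => ?_⟩
  refine QuotientGroup.induction_on x fun y => ?_
  have : (y : ↥A ⧸ A.subgroupOf A) = 1 := by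
    rw [QuotientGroup.eq_one_iff]
    simp [Subgroup.mem_subgroupOf]
  exact this ▸ (Subgroup.zpowers (1 : ↥A ⧸ A.subgroupOf A)).one_mem

lemma cycStep_of_sup {A B : Subgroup N} (hBA : B ≤ A) (hn : (B.subgroupOf A).Normal)
    (g : N) (hg : g ∈ A) (hsup : B ⊔ Subgroup.zpowers g = A) : CycStep A B := by
  refine ⟨hBA, hn, ?_⟩
  have htop : B.subgroupOf A ⊔ Subgroup.zpowers (⟨g, hg⟩ : A) = ⊤ := by
    apply Subgroup.map_injective A.subtype_injective
    rw [Subgroup.map_sup, Subgroup.subgroupOf_map_subtype, MonoidHom.map_zpowers]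
    have h1 : (⊤ : Subgroup A).map A.subtype = A := by
      rw [← MonoidHom.range_eq_map, Subgroup.range_subtype]
    rw [h1]
    simpa [inf_eq_left.mpr hBA] using hsup
  letI := hn
  refine ⟨QuotientGroup.mk' (B.subgroupOf A) (⟨g, hg⟩ : A), fun x => ?_⟩
  have hsurj := QuotientGroup.mk'_surjective (B.subgroupOf A)
  have h2 : Subgroup.map (QuotientGroup.mk' (B.subgroupOf A)) ⊤ = ⊤ :=
    Subgroup.map_top_of_surjective _ hsurj
  rw [← htop, Subgroup.map_sup] at h2
  have h3 : Subgroup.map (QuotientGroup.mk' (B.subgroupOf A)) (B.subgroupOf A) = ⊥ := by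
    refine le_antisymm ?_ bot_le
    rintro y ⟨z, hz, rfl⟩
    simpa [Subgroup.mem_bot, QuotientGroup.eq_one_iff] using hz
  rw [h3, MonoidHom.map_zpowers, bot_sup_eq] at h2
  have hx : x ∈ (⊤ : Subgroup (↥A ⧸ B.subgroupOf A)) := Subgroup.mem_top x
  rw [← h2] at hx
  exact hx

lemma lcs_succ_comm (i : ℕ) :
    (⊤ : Subgroup N).lowerCentralSeries (i + 1) = ⁅(⊤ : Subgroup N).lowerCentralSeries i, (⊤ : Subgroup N)⁆ := rfl

/-- Any subgroup between two consecutive terms of the lower central series is normal. -/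
lemma normal_of_between {i : ℕ} {K : Subgroup N}
    (h1 : (⊤ : Subgroup N).lowerCentralSeries (i + 1) ≤ K) (h2 : K ≤ (⊤ : Subgroup N).lowerCentralSeries i) : K.Normal := by
  constructor
  intro g hg x
  have hgx : ⁅g, x⁆ ∈ K := by
    apply h1
    rw [lcs_succ_comm]
    exact Subgroup.commutator_mem_commutator (h2 hg) (Subgroup.mem_top x)
  have hxg : ⁅x, g⁆ ∈ K := by
    have := K.inv_mem hgx
    rwa [commutatorElement_inv] at this
  have he : x * g * x⁻¹ = ⁅x, g⁆ * g := by group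
  rw [he]
  exact K.mul_mem hxg hg

variable [DecidableEq N]

/-- Iterated commutators of elements of `T`. -/
def iterComm (T : Finset N) : ℕ → Finset N
  | 0 => T
  | (i + 1) => (T ×ˢ iterComm T i).image fun p => ⁅p.2, p.1⁆

lemma iterComm_card_le (T : Finset N) (i : ℕ) : (iterComm T i).card ≤ T.card ^ (i + 1) := by
  induction i with
  | zero => simp [iterComm]
  | succ i ih =>
    calc (iterComm T (i+1)).card ≤ (T ×ˢ iterComm T i).card := Finset.card_image_le
      _ = T.card * (iterComm T i).card := Finset.card_product _ _
      _ ≤ T.card * T.card ^ (i + 1) := Nat.mul_le_mul_left _ ih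
      _ = T.card ^ (i + 2) := by ring

lemma iterComm_subset (T : Finset N) (i : ℕ) :
    (iterComm T i : Set N) ⊆ ((⊤ : Subgroup N).lowerCentralSeries i : Set N) := by
  induction i with
  | zero => intro x _; simp [Subgroup.lowerCentralSeries_zero]
  | succ i ih =>
    intro x hx
    simp only [iterComm, Finset.coe_image, Set.mem_image] at hx
    obtain ⟨⟨t, c⟩, hp, rfl⟩ := hx
    simp only [Finset.mem_coe, Finset.mem_product] at hp
    rw [SetLike.mem_coe, lcs_succ_comm]
    exact Subgroup.commutator_mem_commutator (ih (hp.2)) (Subgroup.mem_top _)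

/-- Key lemma: the iterated commutators generate the lower central series modulo the
next term. -/
lemma closure_iterComm_sup (T : Finset N) (hT : Subgroup.closure (T : Set N) = ⊤) :
    ∀ i, Subgroup.closure (iterComm T i : Set N) ⊔ (⊤ : Subgroup N).lowerCentralSeries (i + 1) =
      (⊤ : Subgroup N).lowerCentralSeries i := by
  intro i
  induction i with
  | zero =>
    rw [Subgroup.lowerCentralSeries_zero]
    simp [iterComm, hT]
  | succ i ih =>
    set K := Subgroup.closure (iterComm T (i+1) : Set N) ⊔ (⊤ : Subgroup N).lowerCentralSeries (i + 2) with hK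
    have hKle : K ≤ (⊤ : Subgroup N).lowerCentralSeries (i + 1) := by
      apply sup_le
      · rw [Subgroup.closure_le]; exact iterComm_subset T (i+1)
      · exact Subgroup.lowerCentralSeries_antitone (S := ⊤) (by omega)
    have hK2 : (⊤ : Subgroup N).lowerCentralSeries (i + 2) ≤ K := le_sup_right
    have hKnormal : K.Normal := normal_of_between hK2 hKle
    refine le_antisymm hKle ?_
    rw [lcs_succ_comm i]
    rw [Subgroup.commutator_le]
    intro y hy x _
    let D : Subgroup N :=
      { carrier := { y | ∀ x : N, ⁅y, x⁆ ∈ K }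
        one_mem' := by intro x; simpa [commutatorElement_def] using K.one_mem
        mul_mem' := by
          intro a b ha hb x
          have he : ⁅a * b, x⁆ = a * ⁅b, x⁆ * a⁻¹ * ⁅a, x⁆ := by
            simp only [commutatorElement_def]; group
          rw [he]
          exact K.mul_mem (hKnormal.conj_mem _ (hb x) a) (ha x)
        inv_mem' := by
          intro a ha x
          have he : ⁅a⁻¹, x⁆ = a⁻¹ * ⁅a, x⁆⁻¹ * a⁻¹⁻¹ := by
            simp only [commutatorElement_def]; group
          rw [he]
          exact hKnormal.conj_mem _ (K.inv_mem (ha x)) a⁻¹ }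
    have hLD : (⊤ : Subgroup N).lowerCentralSeries i ≤ D := by
      rw [← ih]
      apply sup_le
      · rw [Subgroup.closure_le]
        intro c hc
        intro x
        let E : Subgroup N :=
          { carrier := { x | ⁅c, x⁆ ∈ K }
            one_mem' := by simpa [commutatorElement_def] using K.one_mem
            mul_mem' := by
              intro a b ha hb
              have he : ⁅c, a * b⁆ = ⁅c, a⁆ * (a * ⁅c, b⁆ * a⁻¹) := by
                simp only [commutatorElement_def]; group
              simp only [Set.mem_setOf_eq] at ha hb ⊢
              rw [he]
              exact K.mul_mem ha (hKnormal.conj_mem _ hb a)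
            inv_mem' := by
              intro a ha
              have he : ⁅c, a⁻¹⁆ = a⁻¹ * ⁅c, a⁆⁻¹ * a⁻¹⁻¹ := by
                simp only [commutatorElement_def]; group
              simp only [Set.mem_setOf_eq] at ha ⊢
              rw [he]
              exact hKnormal.conj_mem _ (K.inv_mem ha) a⁻¹ }
        have hTE : (T : Set N) ⊆ E := by
          intro t ht
          show ⁅c, t⁆ ∈ K
          apply le_sup_left (a := Subgroup.closure (iterComm T (i+1) : Set N))
          apply Subgroup.subset_closure
          simp only [iterComm, Finset.coe_image, Set.mem_image]
          exact ⟨(t, c), by simpa [Finset.mem_product] using ⟨ht, hc⟩, rfl⟩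
        have hEtop : (⊤ : Subgroup N) ≤ E := by
          rw [← hT, Subgroup.closure_le]; exact hTE
        exact hEtop (Subgroup.mem_top x)
      · intro y hy x
        apply hK2
        rw [lcs_succ_comm]
        exact Subgroup.commutator_mem_commutator hy (Subgroup.mem_top x)
    exact hLD hy x

/-- Refine an extension `B ≤ A` with `A = B ⊔ closure S` and all intermediate subgroups
normal into a chain of cyclic steps of length `S.card`. -/
lemma refine_chain (B : Subgroup N) (S : Finset N) :
    ∀ A : Subgroup N, (∀ K : Subgroup N, B ≤ K → K ≤ A → K.Normal) → B ≤ A →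
      B ⊔ Subgroup.closure (S : Set N) = A →
    ∃ c : ℕ → Subgroup N, c 0 = A ∧ c S.card = B ∧ ∀ j < S.card, CycStep (c j) (c (j+1)) := by
  induction S using Finset.induction_on with
  | empty =>
    intro A hnorm hBA hS
    have hAB : A = B := by rw [← hS]; simp
    exact ⟨fun _ => B, hAB.symm, by simp, fun j hj => absurd hj (by simp)⟩
  | @insert a S ha ih =>
    intro A hnorm hBA hS
    set A' := B ⊔ Subgroup.closure (S : Set N) with hA'
    have hclins : Subgroup.closure ((insert a S : Finset N) : Set N)
        = Subgroup.zpowers a ⊔ Subgroup.closure (S : Set N) := by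
      rw [Finset.coe_insert, Set.insert_eq, Subgroup.closure_union, Subgroup.zpowers_eq_closure]
    have hA'A : A' ≤ A := by
      rw [← hS, hclins]
      exact sup_le le_sup_left (le_sup_of_le_right le_sup_right)
    obtain ⟨c, hc0, hcB, hstep⟩ :=
      ih A' (fun K h1 h2 => hnorm K h1 (h2.trans hA'A)) le_sup_left rfl
    have haA : a ∈ A := by
      rw [← hS]
      exact Subgroup.mem_sup_right (Subgroup.subset_closure (by simp))
    have hsupA : A' ⊔ Subgroup.zpowers a = A := by
      rw [← hS, hclins, hA']
      rw [sup_assoc, sup_comm (Subgroup.closure (S : Set N)) (Subgroup.zpowers a)]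
    refine ⟨fun j => if j = 0 then A else c (j - 1), by simp, ?_, ?_⟩
    · rw [Finset.card_insert_of_notMem ha]
      simp [hcB]
    · intro j hj
      rw [Finset.card_insert_of_notMem ha] at hj
      match j with
      | 0 =>
        have key : CycStep A (if (1 : ℕ) = 0 then A else c (1 - 1)) := by
          simp only [if_neg (Nat.one_ne_zero), Nat.sub_self]
          rw [hc0]
          haveI : A'.Normal := hnorm A' le_sup_left hA'A
          exact cycStep_of_sup hA'A inferInstance a haA hsupA
        exact key
      | (j' + 1) =>
        have key : CycStep (if j' + 1 = 0 then A else c (j' + 1 - 1))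
            (if j' + 1 + 1 = 0 then A else c (j' + 1 + 1 - 1)) := by
          have e1 : j' + 1 - 1 = j' := by omega
          have e2 : j' + 1 + 1 - 1 = j' + 1 := by omega
          rw [if_neg (Nat.succ_ne_zero j'), if_neg (Nat.succ_ne_zero (j' + 1)), e1, e2]
          exact hstep j' (by omega)
        exact key

end Aux

lemma geom_aux (k : ℕ) (hk : 2 ≤ k) (n : ℕ) :
    (∑ j ∈ Finset.range n, k ^ (j + 1)) * (k - 1) = k ^ (n + 1) - k := by
  induction n with
  | zero => simp
  | succ n ih =>
    rw [Finset.sum_range_succ, Nat.add_mul, ih]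
    have h1 : k ≤ k ^ (n + 1) := Nat.le_self_pow (by omega) k
    have h2 : k ^ (n + 1 + 1) = k ^ (n + 1) * k := by ring
    have h3 : k ^ (n + 1) * (k - 1) = k ^ (n + 1) * k - k ^ (n + 1) := by
      rw [Nat.mul_sub, Nat.mul_one]
    have h4 : k ^ (n + 1) ≤ k ^ (n + 1 + 1) := Nat.pow_le_pow_right (by omega) (by omega)
    omega

/-- if `N` is a nilpotent group of nilpotency class at most `n` generated by
`k ≥ 2` elements, then `N` admits a subnormal series with cyclic quotients of length
`s = (k^(n+1) − k)/(k − 1) = k + k² + … + kⁿ`. In particular every finitely generated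
nilpotent group is polycyclic. -/
theorem cyclic_series_of_nilpotent {N : Type*} [Group N] (n : ℕ)
    (hnil : (⊤ : Subgroup N).lowerCentralSeries n = ⊥) (k : ℕ) (hk : 2 ≤ k)
    (T : Finset N) (hT : Subgroup.closure (T : Set N) = ⊤) (hTcard : T.card ≤ k) :
    ∃ c : Fin ((k ^ (n + 1) - k) / (k - 1) + 1) → Subgroup N,
      IsCyclicSeries ((k ^ (n + 1) - k) / (k - 1)) c := by
  classical
  have main : ∀ i : ℕ, ∃ (m : ℕ) (c : ℕ → Subgroup N),
      m ≤ ∑ j ∈ Finset.range i, k ^ (j + 1) ∧ c 0 = ⊤ ∧ c m = (⊤ : Subgroup N).lowerCentralSeries i ∧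
      ∀ j < m, CycStep (c j) (c (j + 1)) := by
    intro i
    induction i with
    | zero =>
      exact ⟨0, fun _ => ⊤, by simp, rfl, by rw [Subgroup.lowerCentralSeries_zero], by omega⟩
    | succ i ih =>
      obtain ⟨m, c, hm, hc0, hcm, hstep⟩ := ih
      obtain ⟨d, hd0, hdB, hdstep⟩ :=
        refine_chain ((⊤ : Subgroup N).lowerCentralSeries (i + 1)) (iterComm T i) ((⊤ : Subgroup N).lowerCentralSeries i)
          (fun K h1 h2 => normal_of_between h1 h2)
          (Subgroup.lowerCentralSeries_antitone (S := ⊤) (by omega))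
          (by rw [sup_comm]; exact closure_iterComm_sup T hT i)
      set q := (iterComm T i).card with hq
      refine ⟨m + q, fun j => if j < m then c j else d (j - m), ?_, ?_, ?_, ?_⟩
      · have h1 : q ≤ k ^ (i + 1) :=
          (iterComm_card_le T i).trans (Nat.pow_le_pow_left hTcard _)
        rw [Finset.sum_range_succ]
        omega
      · by_cases h : 0 < m
        · simpa [h] using hc0
        · have hm0 : m = 0 := by omega
          have : (⊤ : Subgroup N).lowerCentralSeries i = ⊤ := by rw [← hcm, hm0, hc0]
          simp only [if_neg (by omega : ¬ (0 : ℕ) < m)]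
          rw [Nat.zero_sub, hd0, this]
      · simp only [if_neg (by omega : ¬ m + q < m), Nat.add_sub_cancel_left]
        exact hdB
      · intro j hj
        have key : CycStep (if j < m then c j else d (j - m))
            (if j + 1 < m then c (j + 1) else d (j + 1 - m)) := by
          rcases lt_or_ge j m with h | h
          · have e1 : (if j < m then c j else d (j - m)) = c j := if_pos h
            have e2 : (if j + 1 < m then c (j + 1) else d (j + 1 - m)) = c (j + 1) := by
              by_cases h2 : j + 1 < m
              · exact if_pos h2
              · have hjm : j + 1 = m := by omega
                rw [if_neg h2, hjm, Nat.sub_self, hd0, ← hcm]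
            rw [e1, e2]
            exact hstep j h
          · have e1 : (if j < m then c j else d (j - m)) = d (j - m) := if_neg (by omega)
            have e2 : (if j + 1 < m then c (j + 1) else d (j + 1 - m)) = d (j - m + 1) := by
              rw [if_neg (by omega)]
              congr 1
              omega
            rw [e1, e2]
            exact hdstep (j - m) (by omega)
        exact key
  obtain ⟨m, c, hm, hc0, hcm, hstep⟩ := main n
  rw [hnil] at hcm
  set s := (k ^ (n + 1) - k) / (k - 1) with hsdef
  have hs : s = ∑ j ∈ Finset.range n, k ^ (j + 1) := by
    rw [hsdef]
    exact Nat.div_eq_of_eq_mul_left (by omega) (geom_aux k hk n).symm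
  have hms : m ≤ s := by omega
  refine ⟨fun j => c (min j.val m), ?_, ?_, ?_⟩
  · simpa using hc0
  · simp only [Fin.val_last, min_eq_right hms]
    exact hcm
  · intro i
    have key : CycStep (c (min i.val m)) (c (min (i.val + 1) m)) := by
      rcases lt_or_ge i.val m with h | h
      · have e1 : min i.val m = i.val := by omega
        have e2 : min (i.val + 1) m = i.val + 1 := by omega
        rw [e1, e2]
        exact hstep i.val h
      · have e1 : min i.val m = m := by omega
        have e2 : min (i.val + 1) m = m := by omega
        rw [e1, e2]
        exact cycStep_self (c m)
    exact key
end

section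
/- Let F be the free group on the alphabet {a, b, c, d, e} and fix n ≥ 2. Let H_1 = ⟨acb⁻¹, ac⁻¹b⁻¹, adb⁻¹, ad⁻¹b⁻¹⟩ and, for i = 2, ..., n, let H_i = ⟨H_1, ab⁻¹, a e^{2^{n−i}} b⁻¹⟩. Then H_1 < H_2 < ... < H_n is a strictly ascending chain of subgroups of F, and every subgroup H_i (1 ≤ i ≤ n) has rank exactly 4. -/
namespace ChainExample

/-- The free group on the alphabet `{a, b, c, d, e}`. -/
abbrev F := FreeGroup (Fin 5)

def a : F := FreeGroup.of 0
def b : F := FreeGroup.of 1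
def c : F := FreeGroup.of 2
def d : F := FreeGroup.of 3
def e : F := FreeGroup.of 4

/-! ### Generic lemmas about `Multiplicative (Fin 4 → ZMod p)` -/

abbrev Wp (p : ℕ) := Multiplicative (Fin 4 → ZMod p)

lemma sub_eq_top (p : ℕ) [NeZero p] (K : Subgroup (Wp p))
    (h : ∀ i : Fin 4, Multiplicative.ofAdd (Pi.single i (1 : ZMod p)) ∈ K) : K = ⊤ := by
  rw [Subgroup.eq_top_iff']
  intro x
  have key : ∀ (i : Fin 4),
      ((Multiplicative.toAdd x i).val • Pi.single i (1 : ZMod p) : Fin 4 → ZMod p)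
      = Pi.single i (Multiplicative.toAdd x i) := by
    intro i
    rw [← Pi.single_smul, nsmul_eq_mul, mul_one, ZMod.natCast_val, ZMod.cast_id]
  have hx : x = ∏ i : Fin 4,
      (Multiplicative.ofAdd (Pi.single i (1 : ZMod p))) ^ (Multiplicative.toAdd x i).val := by
    apply Multiplicative.toAdd.injective
    simp only [toAdd_prod, toAdd_pow, toAdd_ofAdd]
    simp only [key]
    exact (Finset.univ_sum_single (Multiplicative.toAdd x)).symm
  rw [hx]
  exact Subgroup.prod_mem _ fun i _ => pow_mem (h i) _

lemma card_ge_of_closure_top (p : ℕ) [Fact p.Prime] (T : Finset (Wp p))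
    (h : Subgroup.closure (T : Set (Wp p)) = ⊤) : 4 ≤ T.card := by
  classical
  set T' : Finset (Fin 4 → ZMod p) := T.image Multiplicative.toAdd with hT'
  set P := Submodule.span (ZMod p) (T' : Set (Fin 4 → ZMod p)) with hP
  let Q : Subgroup (Wp p) :=
  { carrier := {x : Wp p | Multiplicative.toAdd x ∈ P}
    one_mem' := P.zero_mem
    mul_mem' := fun hx hy => P.add_mem hx hy
    inv_mem' := fun hx => P.neg_mem hx }
  have hle : Subgroup.closure (T : Set (Wp p)) ≤ Q := by
    rw [Subgroup.closure_le]
    intro t ht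
    show Multiplicative.toAdd t ∈ P
    exact Submodule.subset_span (Finset.mem_coe.mpr (Finset.mem_image_of_mem _ ht))
  have hPtop : P = ⊤ := by
    rw [Submodule.eq_top_iff']
    intro v
    have : Multiplicative.ofAdd v ∈ Q := hle (h ▸ Subgroup.mem_top _)
    exact this
  have h4 : Module.finrank (ZMod p) (Fin 4 → ZMod p) = 4 := by
    simp [Module.finrank_fintype_fun_eq_card]
  calc 4 = Module.finrank (ZMod p) (Fin 4 → ZMod p) := h4.symm
    _ = Module.finrank (ZMod p) P := by rw [hPtop]; exact (finrank_top _ _).symm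
    _ ≤ T'.card := finrank_span_finset_le_card T'
    _ ≤ T.card := Finset.card_image_le

/-! ### The homomorphism detecting that `H 1` has rank `≥ 4` -/

abbrev G2 := DihedralGroup 4 × DihedralGroup 4

open DihedralGroup in
def w : Fin 4 → G2 := ![(sr 0, 1), (sr 2, 1), (1, sr 0), (1, sr 2)]

def kap (x : Wp 2) : G2 :=
  w 0 ^ (Multiplicative.toAdd x 0).val * w 1 ^ (Multiplicative.toAdd x 1).val *
  w 2 ^ (Multiplicative.toAdd x 2).val * w 3 ^ (Multiplicative.toAdd x 3).val

lemma kap_mul : ∀ x y, kap (x * y) = kap x * kap y := by decide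

lemma kap_inj : Function.Injective kap := by decide

def iota : Wp 2 →* G2 := MonoidHom.mk' kap kap_mul

lemma iota_inj : Function.Injective iota := kap_inj

lemma iota_basis : ∀ i : Fin 4, iota (Multiplicative.ofAdd (Pi.single i 1)) = w i := by decide

open DihedralGroup in
def rho1 : F →* G2 :=
  FreeGroup.lift ![1, (sr 3, sr 3), (DihedralGroup.r 3, sr 3), (sr 3, DihedralGroup.r 3), 1]

/-- the four generators of `H 1` -/
def gen : Fin 4 → F := ![a * c * b⁻¹, a * c⁻¹ * b⁻¹, a * d * b⁻¹, a * d⁻¹ * b⁻¹]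

lemma rho1_gen : ∀ i : Fin 4, rho1 (gen i) = w i := by
  intro i
  fin_cases i <;>
    · simp only [gen, rho1, a, b, c, d, Matrix.cons_val_zero, Matrix.cons_val_one,
        Matrix.head_cons, Matrix.cons_val_two, Matrix.tail_cons, Matrix.cons_val_three,
        map_mul, map_inv, FreeGroup.lift_apply_of]
      decide

lemma gen_mem_set (i : Fin 4) :
    gen i ∈ ({a*c*b⁻¹, a*c⁻¹*b⁻¹, a*d*b⁻¹, a*d⁻¹*b⁻¹} : Set F) := by
  fin_cases i <;> simp [gen]

lemma mem_gen_set {y : F} (hy : y ∈ ({a*c*b⁻¹, a*c⁻¹*b⁻¹, a*d*b⁻¹, a*d⁻¹*b⁻¹} : Set F)) :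
    ∃ i : Fin 4, y = gen i := by
  rcases hy with h|h|h|h
  exacts [⟨0, h⟩, ⟨1, h⟩, ⟨2, h⟩, ⟨3, h⟩]

/-- Rank lower bound for `H 1`. -/
lemma lb1 (K : Subgroup F)
    (hK : K = Subgroup.closure {a*c*b⁻¹, a*c⁻¹*b⁻¹, a*d*b⁻¹, a*d⁻¹*b⁻¹})
    (S : Finset F) (hS : Subgroup.closure (S : Set F) = K) : 4 ≤ S.card := by
  classical
  have hmapK : Subgroup.map rho1 K = Subgroup.map iota ⊤ := by
    apply le_antisymm
    · rw [hK, MonoidHom.map_closure, Subgroup.closure_le]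
      rintro x ⟨y, hy, rfl⟩
      obtain ⟨i, rfl⟩ := mem_gen_set hy
      rw [rho1_gen i, ← iota_basis i]
      exact Subgroup.mem_map_of_mem iota (Subgroup.mem_top _)
    · have htop : (⊤ : Subgroup (Wp 2)) ≤ Subgroup.closure
          (Set.range fun i : Fin 4 => Multiplicative.ofAdd (Pi.single i (1 : ZMod 2))) :=
        le_of_eq (sub_eq_top 2 _ (fun i => Subgroup.subset_closure (Set.mem_range_self i))).symm
      calc Subgroup.map iota ⊤
          ≤ Subgroup.map iota (Subgroup.closure _) := Subgroup.map_mono htop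
        _ = Subgroup.closure (iota '' _) := MonoidHom.map_closure _ _
        _ ≤ Subgroup.map rho1 K := by
            rw [Subgroup.closure_le]
            rintro x ⟨-, ⟨i, rfl⟩, rfl⟩
            exact ⟨gen i, hK ▸ Subgroup.subset_closure (gen_mem_set i),
              ((iota_basis i).trans (rho1_gen i).symm).symm⟩
  have h2 : Subgroup.closure (rho1 '' (S : Set F)) = Subgroup.map iota ⊤ := by
    rw [← MonoidHom.map_closure, hS, hmapK]
  have hmem : ∀ s ∈ S, ∃ v : Wp 2, iota v = rho1 s := by
    intro s hs
    have : rho1 s ∈ Subgroup.closure (rho1 '' (S : Set F)) :=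
      Subgroup.subset_closure (Set.mem_image_of_mem _ hs)
    rw [h2] at this
    obtain ⟨v, -, hv⟩ := this
    exact ⟨v, hv⟩
  choose f hf using hmem
  set T : Finset (Wp 2) := S.attach.image (fun s => f s.1 s.2) with hT
  have himg : iota '' (T : Set (Wp 2)) = rho1 '' (S : Set F) := by
    ext x
    constructor
    · rintro ⟨v, hv, rfl⟩
      rw [hT, Finset.mem_coe, Finset.mem_image] at hv
      obtain ⟨s, -, rfl⟩ := hv
      exact ⟨s.1, s.2, (hf s.1 s.2).symm⟩
    · rintro ⟨s, hs, rfl⟩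
      exact ⟨f s hs, Finset.mem_coe.mpr
        (Finset.mem_image.mpr ⟨⟨s, hs⟩, Finset.mem_attach _ _, rfl⟩), hf s hs⟩
  have hmapT : Subgroup.map iota (Subgroup.closure (T : Set (Wp 2))) = Subgroup.map iota ⊤ := by
    rw [MonoidHom.map_closure, himg, h2]
  have hTtop : Subgroup.closure (T : Set (Wp 2)) = ⊤ := Subgroup.map_injective iota_inj hmapT
  calc 4 ≤ T.card := card_ge_of_closure_top 2 T hTtop
    _ ≤ S.attach.card := Finset.card_image_le
    _ = S.card := Finset.card_attach

/-! ### The homomorphism detecting that `H i` (`i ≥ 2`) has rank `≥ 4` -/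

def rho3 : F →* Wp 3 :=
  FreeGroup.lift ![Multiplicative.ofAdd (Pi.single 3 1), 1, Multiplicative.ofAdd (Pi.single 0 1),
    Multiplicative.ofAdd (Pi.single 1 1), Multiplicative.ofAdd (Pi.single 2 1)]

lemma rho3_u0 : rho3 ((a*c*b⁻¹) * (a*b⁻¹)⁻¹) = Multiplicative.ofAdd (Pi.single 0 1) := by
  simp only [map_mul, map_inv, rho3, a, b, c, FreeGroup.lift_apply_of]
  decide

lemma rho3_u1 : rho3 ((a*d*b⁻¹) * (a*b⁻¹)⁻¹) = Multiplicative.ofAdd (Pi.single 1 1) := by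
  simp only [map_mul, map_inv, rho3, a, b, d, FreeGroup.lift_apply_of]
  decide

lemma rho3_u3 : rho3 (a*b⁻¹) = Multiplicative.ofAdd (Pi.single 3 1) := by
  simp only [map_mul, map_inv, rho3, a, b, FreeGroup.lift_apply_of]
  decide

lemma rho3_u2 (k : ℕ) :
    rho3 (((a*e^(2^k)*b⁻¹) * (a*b⁻¹)⁻¹)^(2^k)) = Multiplicative.ofAdd (Pi.single 2 1) := by
  have h1 : rho3 ((a*e^(2^k)*b⁻¹) * (a*b⁻¹)⁻¹)
      = (Multiplicative.ofAdd (Pi.single (2 : Fin 4) (1 : ZMod 3)) : Wp 3)^(2^k) := by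
    simp only [map_mul, map_inv, map_pow, rho3, a, b, e, FreeGroup.lift_apply_of]
    simp only [Matrix.cons_val_zero, Matrix.cons_val_one, Matrix.cons_val_four,
      Matrix.head_cons, Matrix.tail_cons]
    simp only [inv_one, mul_one]
    rw [mul_comm (Multiplicative.ofAdd (Pi.single 3 1)) _, mul_inv_cancel_right]
  rw [map_pow, h1, ← pow_mul]
  have h2 : ((2^k * 2^k : ℕ) : ZMod 3) = 1 := by
    push_cast
    rw [← mul_pow]
    rw [show ((2:ZMod 3) * 2) = 1 from by decide, one_pow]
  rw [← ofAdd_nsmul, ← Pi.single_smul, nsmul_eq_mul, mul_one, h2]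

/-- Rank lower bound for `H i`, `i ≥ 2`. -/
lemma lb2 (k : ℕ) (K : Subgroup F)
    (hK : K = Subgroup.closure {a*c*b⁻¹, a*c⁻¹*b⁻¹, a*d*b⁻¹, a*d⁻¹*b⁻¹}
      ⊔ Subgroup.closure {a*b⁻¹, a*e^(2^k)*b⁻¹})
    (S : Finset F) (hS : Subgroup.closure (S : Set F) = K) : 4 ≤ S.card := by
  classical
  have hacb : a*c*b⁻¹ ∈ K := by
    rw [hK]; exact Subgroup.mem_sup_left (Subgroup.subset_closure (by simp))
  have hadb : a*d*b⁻¹ ∈ K := by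
    rw [hK]; exact Subgroup.mem_sup_left (Subgroup.subset_closure (by simp))
  have hab : a*b⁻¹ ∈ K := by
    rw [hK]; exact Subgroup.mem_sup_right (Subgroup.subset_closure (by simp))
  have haeb : a*e^(2^k)*b⁻¹ ∈ K := by
    rw [hK]; exact Subgroup.mem_sup_right (Subgroup.subset_closure (by simp))
  have hmap : Subgroup.map rho3 K = ⊤ := by
    apply sub_eq_top
    intro i
    fin_cases i
    · exact ⟨(a*c*b⁻¹) * (a*b⁻¹)⁻¹, mul_mem hacb (inv_mem hab), rho3_u0⟩
    · exact ⟨(a*d*b⁻¹) * (a*b⁻¹)⁻¹, mul_mem hadb (inv_mem hab), rho3_u1⟩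
    · exact ⟨((a*e^(2^k)*b⁻¹) * (a*b⁻¹)⁻¹)^(2^k),
        pow_mem (mul_mem haeb (inv_mem hab)) _, rho3_u2 k⟩
    · exact ⟨a*b⁻¹, hab, rho3_u3⟩
  have h2 : Subgroup.closure ((S.image rho3 : Finset (Wp 3)) : Set (Wp 3)) = ⊤ := by
    rw [Finset.coe_image, ← MonoidHom.map_closure, hS, hmap]
  calc 4 ≤ (S.image rho3).card := card_ge_of_closure_top 3 _ h2
    _ ≤ S.card := Finset.card_image_le

/-! ### Homomorphisms for strictness of the chain -/

/-- homomorphism detecting `a * b⁻¹ ∉ H 1` -/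
def psi : F →* ℤˣ := FreeGroup.lift ![-1, 1, -1, -1, 1]

/-- homomorphism detecting `a e^(2^(n-i-1)) b⁻¹ ∉ H i` -/
def chi (m : ℕ) : F →* Multiplicative (ZMod m) :=
  FreeGroup.lift ![1, 1, 1, 1, Multiplicative.ofAdd 1]

/-- homomorphism used to distinguish elements -/
def eps : F →* Multiplicative ℤ := FreeGroup.lift ![1, 1, 1, 1, Multiplicative.ofAdd 1]

lemma psi_gen1 : psi (a * c * b⁻¹) = 1 ∧ psi (a * c⁻¹ * b⁻¹) = 1 ∧ psi (a * d * b⁻¹) = 1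
    ∧ psi (a * d⁻¹ * b⁻¹) = 1 ∧ psi (a * b⁻¹) = -1 := by
  refine ⟨?_, ?_, ?_, ?_, ?_⟩ <;>
  · simp only [psi, a, b, c, d, map_mul, map_inv, FreeGroup.lift_apply_of]
    decide

lemma chi_vals (m : ℕ) : chi m a = 1 ∧ chi m b = 1 ∧ chi m c = 1 ∧ chi m d = 1
    ∧ chi m e = Multiplicative.ofAdd 1 := by
  refine ⟨?_, ?_, ?_, ?_, ?_⟩ <;> simp [chi, a, b, c, d, e, FreeGroup.lift_apply_of]

lemma chi_aekb (m k : ℕ) : chi m (a * e ^ k * b⁻¹) = Multiplicative.ofAdd ((k : ZMod m)) := by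
  simp only [chi, a, b, e, map_mul, map_inv, map_pow, FreeGroup.lift_apply_of]
  norm_num
  simp only [Matrix.cons_val_four, Matrix.tail_cons, Matrix.head_cons]
  rw [← ofAdd_nsmul]
  norm_num

lemma eps_aekb (k : ℕ) : eps (a * e ^ k * b⁻¹) = Multiplicative.ofAdd (k : ℤ) := by
  simp only [eps, a, b, e, map_mul, map_inv, map_pow, FreeGroup.lift_apply_of]
  norm_num
  simp only [Matrix.cons_val_four, Matrix.tail_cons, Matrix.head_cons]
  rw [← ofAdd_nsmul]
  norm_num

lemma eps_others : eps (a*c*b⁻¹) = 1 ∧ eps (a*d*b⁻¹) = 1 ∧ eps (a*b⁻¹) = 1 := by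
  refine ⟨?_, ?_, ?_⟩ <;> simp [eps, a, b, c, d, map_mul, map_inv, FreeGroup.lift_apply_of]

/-! ### The main theorem -/

/-- in the free group `F` on `{a,b,c,d,e}`, fix `n ≥ 2`, let
`H 1 = ⟨acb⁻¹, ac⁻¹b⁻¹, adb⁻¹, ad⁻¹b⁻¹⟩` and, for `2 ≤ i ≤ n`,
`H i = ⟨H 1, ab⁻¹, a e^(2^(n−i)) b⁻¹⟩`. Then `H 1 < H 2 < … < H n` is a strictly
ascending chain and each `H i` (for `1 ≤ i ≤ n`) has rank exactly `4`. -/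
theorem strict_chain_of_rank_four (n : ℕ) (hn : 2 ≤ n) (H : ℕ → Subgroup F)
    (hH1 : H 1 = Subgroup.closure
      {a * c * b⁻¹, a * c⁻¹ * b⁻¹, a * d * b⁻¹, a * d⁻¹ * b⁻¹})
    (hHi : ∀ i, 2 ≤ i → i ≤ n →
      H i = H 1 ⊔ Subgroup.closure {a * b⁻¹, a * e ^ (2 ^ (n - i)) * b⁻¹}) :
    (∀ i, 1 ≤ i → i < n → H i < H (i + 1)) ∧
      (∀ i, 1 ≤ i → i ≤ n → (H i).rk = 4) := by
  classical
  constructor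
  · -- the chain is strictly increasing
    intro i hi1 hilt
    rcases eq_or_lt_of_le hi1 with h1 | h2
    · -- case `i = 1`
      subst h1
      have hH2 : H (1 + 1) = H 1 ⊔ Subgroup.closure {a * b⁻¹, a * e ^ (2 ^ (n - 2)) * b⁻¹} :=
        hHi 2 le_rfl hn
      rw [SetLike.lt_iff_le_and_exists]
      refine ⟨by rw [hH2]; exact le_sup_left, a * b⁻¹, ?_, ?_⟩
      · rw [hH2]
        exact Subgroup.mem_sup_right (Subgroup.subset_closure (by simp))
      · intro hmem
        have hker : H 1 ≤ psi.ker := by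
          rw [hH1, Subgroup.closure_le]
          intro x hx
          rw [SetLike.mem_coe, MonoidHom.mem_ker]
          obtain ⟨p1, p2, p3, p4, -⟩ := psi_gen1
          rcases hx with rfl|rfl|rfl|rfl
          exacts [p1, p2, p3, p4]
        have hone := hker hmem
        rw [MonoidHom.mem_ker, psi_gen1.2.2.2.2] at hone
        exact absurd hone (by decide)
    · -- case `2 ≤ i`
      have hi2 : 2 ≤ i := h2
      have hni : n - i = (n - i - 1) + 1 := by omega
      have hni1 : n - (i+1) = n - i - 1 := by omega
      set j := n - i - 1 with hj
      have hHib : H i = H 1 ⊔ Subgroup.closure {a * b⁻¹, a * e ^ (2 ^ (j+1)) * b⁻¹} := by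
        rw [hHi i hi2 (le_of_lt hilt), hni]
      have hHis : H (i+1) = H 1 ⊔ Subgroup.closure {a * b⁻¹, a * e ^ (2 ^ j) * b⁻¹} := by
        rw [hHi (i+1) (by omega) (by omega), hni1]
      have hiden : a * e ^ 2 ^ (j+1) * b⁻¹
          = (a*e^(2^j)*b⁻¹) * (a*b⁻¹)⁻¹ * (a*e^(2^j)*b⁻¹) := by
        rw [pow_succ, pow_mul, pow_two]
        generalize e ^ (2^j) = u
        group
      rw [SetLike.lt_iff_le_and_exists]
      refine ⟨?_, a * e ^ (2^j) * b⁻¹, ?_, ?_⟩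
      · rw [hHib, hHis]
        apply sup_le le_sup_left
        rw [Subgroup.closure_le]
        intro x hx
        rcases hx with rfl | rfl
        · exact Subgroup.mem_sup_right (Subgroup.subset_closure (by simp))
        · rw [hiden]
          have hu1 : a*e^(2^j)*b⁻¹ ∈ H 1 ⊔ Subgroup.closure {a * b⁻¹, a * e ^ (2 ^ j) * b⁻¹} :=
            Subgroup.mem_sup_right (Subgroup.subset_closure (by simp))
          have hu2 : a*b⁻¹ ∈ H 1 ⊔ Subgroup.closure {a * b⁻¹, a * e ^ (2 ^ j) * b⁻¹} :=
            Subgroup.mem_sup_right (Subgroup.subset_closure (by simp))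
          exact mul_mem (mul_mem hu1 (inv_mem hu2)) hu1
      · rw [hHis]
        exact Subgroup.mem_sup_right (Subgroup.subset_closure (by simp))
      · intro hmem
        have hker : H i ≤ (chi (2^(j+1))).ker := by
          rw [hHib]
          obtain ⟨q1, q2, q3, q4, q5⟩ := chi_vals (2^(j+1))
          apply sup_le
          · rw [hH1, Subgroup.closure_le]
            intro x hx
            rw [SetLike.mem_coe, MonoidHom.mem_ker]
            rcases hx with rfl|rfl|rfl|rfl <;>
              simp [map_mul, map_inv, q1, q2, q3, q4]
          · rw [Subgroup.closure_le]
            intro x hx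
            rw [SetLike.mem_coe, MonoidHom.mem_ker]
            rcases hx with rfl | rfl
            · simp [map_mul, map_inv, q1, q2]
            · rw [chi_aekb, ZMod.natCast_self]
              rfl
        have hone := hker hmem
        rw [MonoidHom.mem_ker, chi_aekb] at hone
        have hzero : ((2^j : ℕ) : ZMod (2^(j+1))) = 0 := by
          have := congrArg Multiplicative.toAdd hone
          simpa using this
        haveI : NeZero ((2:ℕ)^(j+1)) := ⟨pow_ne_zero _ two_ne_zero⟩
        rw [ZMod.natCast_eq_zero_iff] at hzero
        have hle := Nat.le_of_dvd (by positivity) hzero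
        have hlt : (2:ℕ)^j < 2^(j+1) := by
          exact Nat.pow_lt_pow_right (by norm_num) (Nat.lt_succ_self j)
        omega
  · -- each `H i` has rank `4`
    intro i hi1 hin
    rcases eq_or_lt_of_le hi1 with h1 | h2
    · -- case `i = 1`
      subst h1
      have hwit : ∃ S : Finset F, Subgroup.closure (S : Set F) = H 1 ∧ S.card = 4 := by
        refine ⟨{a*c*b⁻¹, a*c⁻¹*b⁻¹, a*d*b⁻¹, a*d⁻¹*b⁻¹}, ?_, by decide⟩
        rw [hH1]
        congr 1
        simp
      unfold Subgroup.rk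
      apply le_antisymm
      · exact Nat.sInf_le hwit
      · have hne : {m : ℕ | ∃ S : Finset F, Subgroup.closure (S : Set F) = H 1 ∧ S.card = m}.Nonempty :=
          ⟨4, hwit⟩
        apply le_csInf hne
        rintro m ⟨S, hS, rfl⟩
        exact lb1 (H 1) hH1 S hS
    · -- case `2 ≤ i`
      have hi2 : 2 ≤ i := h2
      have hHik : H i = H 1 ⊔ Subgroup.closure {a * b⁻¹, a * e ^ (2 ^ (n-i)) * b⁻¹} :=
        hHi i hi2 hin
      have hHik' : H i = Subgroup.closure {a*c*b⁻¹, a*c⁻¹*b⁻¹, a*d*b⁻¹, a*d⁻¹*b⁻¹}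
          ⊔ Subgroup.closure {a*b⁻¹, a*e^(2^(n-i))*b⁻¹} := by
        rw [hHik, hH1]
      have hwit : ∃ S : Finset F, Subgroup.closure (S : Set F) = H i ∧ S.card = 4 := by
        refine ⟨insert (a*e^(2^(n-i))*b⁻¹) {a*c*b⁻¹, a*d*b⁻¹, a*b⁻¹}, ?_, ?_⟩
        · -- closure of the 4-element set is `H i`
          apply le_antisymm
          · rw [hHik', Subgroup.closure_le]
            intro x hx
            simp only [Finset.coe_insert, Set.mem_insert_iff, Finset.coe_singleton,
              Set.mem_singleton_iff, Finset.mem_coe, Finset.mem_insert,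
              Finset.mem_singleton] at hx
            rcases hx with rfl|rfl|rfl|rfl
            · exact Subgroup.mem_sup_right (Subgroup.subset_closure (by simp))
            · exact Subgroup.mem_sup_left (Subgroup.subset_closure (by simp))
            · exact Subgroup.mem_sup_left (Subgroup.subset_closure (by simp))
            · exact Subgroup.mem_sup_right (Subgroup.subset_closure (by simp))
          · rw [hHik']
            set S : Finset F := insert (a*e^(2^(n-i))*b⁻¹) {a*c*b⁻¹, a*d*b⁻¹, a*b⁻¹} with hSdef
            have mem1 : a*c*b⁻¹ ∈ Subgroup.closure (S : Set F) :=
              Subgroup.subset_closure (by simp [hSdef])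
            have mem2 : a*d*b⁻¹ ∈ Subgroup.closure (S : Set F) :=
              Subgroup.subset_closure (by simp [hSdef])
            have mem3 : a*b⁻¹ ∈ Subgroup.closure (S : Set F) :=
              Subgroup.subset_closure (by simp [hSdef])
            have mem4 : a*e^(2^(n-i))*b⁻¹ ∈ Subgroup.closure (S : Set F) :=
              Subgroup.subset_closure (by simp [hSdef])
            apply sup_le
            · rw [Subgroup.closure_le]
              intro x hx
              rcases hx with rfl|rfl|rfl|rfl
              · exact mem1
              · have : a * c⁻¹ * b⁻¹ = (a*b⁻¹) * (a*c*b⁻¹)⁻¹ * (a*b⁻¹) := by group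
                rw [this]
                exact mul_mem (mul_mem mem3 (inv_mem mem1)) mem3
              · exact mem2
              · have : a * d⁻¹ * b⁻¹ = (a*b⁻¹) * (a*d*b⁻¹)⁻¹ * (a*b⁻¹) := by group
                rw [this]
                exact mul_mem (mul_mem mem3 (inv_mem mem2)) mem3
            · rw [Subgroup.closure_le]
              intro x hx
              rcases hx with rfl | rfl
              · exact mem3
              · exact mem4
        · -- the generating set has 4 elements
          rw [Finset.card_insert_of_notMem, show ({a*c*b⁻¹, a*d*b⁻¹, a*b⁻¹} : Finset F).card = 3
            from by decide]
          intro hmem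
          simp only [Finset.mem_insert, Finset.mem_singleton] at hmem
          obtain ⟨e1, e2, e3⟩ := eps_others
          rcases hmem with heq|heq|heq <;>
          · have := congrArg eps heq
            rw [eps_aekb] at this
            simp only [e1, e2, e3] at this
            have h0 := congrArg Multiplicative.toAdd this
            simp at h0
      unfold Subgroup.rk
      apply le_antisymm
      · exact Nat.sInf_le hwit
      · have hne : {m : ℕ | ∃ S : Finset F, Subgroup.closure (S : Set F) = H i ∧ S.card = m}.Nonempty :=
          ⟨4, hwit⟩
        apply le_csInf hne
        rintro m ⟨S, hS, rfl⟩
        exact lb2 (n-i) (H i) hHik' S hS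

end ChainExample
end

section
/- Let G be a group that is a Takahasi group, let φ be an endomorphism of G, and suppose there is a natural number M such that for every n ≥ 1 the fixed subgroup Fix(φⁿ) = { x ∈ G : φⁿ(x) = x } is generated by at most M elements. Then there exists k ≥ 1 such that Per(φ) = Fix(φ^{k!}); in particular, the periodic subgroup Per(φ) = ⋃_{n ≥ 1} Fix(φⁿ) is a subgroup of G generated by at most M elements. -/
/-- A group `G` is a Takahasi group if for every `M : ℕ`, every ascending chain of
subgroups of `G`, each generated by at most `M` elements, is eventually constant. -/
def IsTakahasiGroup (G : Type*) [Group G] : Prop :=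
  ∀ M : ℕ, ∀ H : ℕ → Subgroup G, (∀ i, H i ≤ H (i + 1)) →
    (∀ i, ∃ S : Finset G, Subgroup.closure (S : Set G) = H i ∧ S.card ≤ M) →
    ∃ p, ∀ i, p ≤ i → H i = H p

/-- The fixed subgroup `Fix(φ) = {x ∈ G : φ(x) = x}` of an endomorphism `φ`. -/
def fixedSubgroup {G : Type*} [Group G] (φ : Monoid.End G) : Subgroup G where
  carrier := {x | φ x = x}
  one_mem' := map_one φ
  mul_mem' := by
    intro x y hx hy
    simp only [Set.mem_setOf_eq] at *
    rw [map_mul, hx, hy]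
  inv_mem' := by
    intro x hx
    simp only [Set.mem_setOf_eq] at *
    rw [map_inv, hx]

/-- The periodic set `Per(φ) = ⋃_{n ≥ 1} Fix(φⁿ)` of an endomorphism `φ`. -/
def perSet {G : Type*} [Group G] (φ : Monoid.End G) : Set G :=
  {x | ∃ n, 1 ≤ n ∧ (φ ^ n) x = x}

lemma fixedSubgroup_le_of_dvd {G : Type*} [Group G] (φ : Monoid.End G) {a b : ℕ}
    (h : a ∣ b) : fixedSubgroup (φ ^ a) ≤ fixedSubgroup (φ ^ b) := by
  obtain ⟨c, rfl⟩ := h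
  intro x hx
  have hx' : (φ ^ a) x = x := hx
  show (φ ^ (a * c)) x = x
  rw [pow_mul]
  induction c with
  | zero => simp
  | succ n ih =>
    rw [pow_succ, Monoid.End.coe_mul, Function.comp_apply, hx', ih]

/-- if `G` is a Takahasi group, `φ` is an endomorphism of `G` and `M` is
such that `Fix(φⁿ)` is generated by at most `M` elements for every `n ≥ 1`, then
`Per(φ) = Fix(φ^(k!))` for some `k ≥ 1`; in particular `Per(φ)` is a subgroup of `G`
generated by at most `M` elements. -/
theorem perSet_eq_fixedSubgroup_of_takahasi {G : Type*} [Group G]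
    (hG : IsTakahasiGroup G) (φ : Monoid.End G) (M : ℕ)
    (hfix : ∀ n, 1 ≤ n →
      ∃ S : Finset G, Subgroup.closure (S : Set G) = fixedSubgroup (φ ^ n) ∧ S.card ≤ M) :
    ∃ k, 1 ≤ k ∧ perSet φ = ↑(fixedSubgroup (φ ^ Nat.factorial k)) ∧
      ∃ S : Finset G, Subgroup.closure (S : Set G) = fixedSubgroup (φ ^ Nat.factorial k) ∧
        S.card ≤ M := by
  set H : ℕ → Subgroup G := fun i => fixedSubgroup (φ ^ Nat.factorial (i + 1)) with hH
  have hmono : ∀ i, H i ≤ H (i + 1) := fun i =>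
    fixedSubgroup_le_of_dvd φ (Nat.factorial_dvd_factorial (by omega))
  have hgen : ∀ i, ∃ S : Finset G, Subgroup.closure (S : Set G) = H i ∧ S.card ≤ M :=
    fun i => hfix _ (Nat.one_le_iff_ne_zero.mpr (Nat.factorial_ne_zero _))
  obtain ⟨p, hp⟩ := hG M H hmono hgen
  refine ⟨p + 1, by omega, ?_, hfix _ (Nat.one_le_iff_ne_zero.mpr (Nat.factorial_ne_zero _))⟩
  ext x
  constructor
  · rintro ⟨n, hn1, hnx⟩
    have hx : x ∈ H (max n p) := by
      have : fixedSubgroup (φ ^ n) ≤ H (max n p) :=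
        fixedSubgroup_le_of_dvd φ (Nat.dvd_factorial hn1 (by omega))
      exact this hnx
    have := hp (max n p) (le_max_right _ _)
    rw [this] at hx
    exact hx
  · intro hx
    exact ⟨Nat.factorial (p + 1), Nat.one_le_iff_ne_zero.mpr (Nat.factorial_ne_zero _), hx⟩
end

section
/- Let F be a free group and let K_1 ≤ K_2 ≤ K_3 ≤ ... be an ascending chain of finitely generated subgroups of F. If there is a natural number M such that rk(K_i) ≤ M for all i, then the chain is stationary, i.e., there exists p such that K_p = K_{p+1} = K_{p+2} = ... (Takahasi's Theorem). -/
/-- Takahasi's Theorem: let `F` be a free group and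
`K 0 ≤ K 1 ≤ K 2 ≤ …` an ascending chain of finitely generated subgroups of `F` of rank
at most `M` (each generated by at most `M` elements). Then the chain is stationary. -/
theorem takahasi {F : Type*} [Group F] [IsFreeGroup F] (M : ℕ) (K : ℕ → Subgroup F)
    (hchain : ∀ i, K i ≤ K (i + 1))
    (hrk : ∀ i, ∃ S : Finset F, Subgroup.closure (S : Set F) = K i ∧ S.card ≤ M) :
    ∃ p, ∀ i, p ≤ i → K i = K p := by
  classical
  set L : Subgroup F := ⨆ i, K i with hLdef
  have hmono : Monotone K := monotone_nat_of_le_succ hchain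
  have hdir : Directed (· ≤ ·) K := hmono.directed_le
  have hKL : ∀ i, K i ≤ L := fun i => le_iSup K i
  have hmemL : ∀ x : F, x ∈ L ↔ ∃ i, x ∈ K i := fun x => Subgroup.mem_iSup_of_directed hdir
  -- `L` is a free group (Nielsen–Schreier)
  let ι := IsFreeGroup.Generators ↥L
  -- the abelianization-style map into the rational free module on generators
  let φ : ↥L →* Multiplicative (ι →₀ ℚ) :=
    IsFreeGroup.lift (fun i => Multiplicative.ofAdd (Finsupp.single i (1 : ℚ)))
  have hφ : ∀ i : ι, φ (IsFreeGroup.of i) = Multiplicative.ofAdd (Finsupp.single i (1 : ℚ)) :=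
    fun i => IsFreeGroup.lift_of _ i
  let g : F → (ι →₀ ℚ) := fun x => if h : x ∈ L then (φ ⟨x, h⟩).toAdd else 0
  have hg_mem : ∀ (x : F) (h : x ∈ L), g x = (φ ⟨x, h⟩).toAdd := fun x h => dif_pos h
  have hg_one : g 1 = 0 := by
    rw [hg_mem 1 L.one_mem]
    have : (⟨(1 : F), L.one_mem⟩ : ↥L) = 1 := rfl
    rw [this, map_one]; rfl
  have hg_mul : ∀ x y, x ∈ L → y ∈ L → g (x * y) = g x + g y := by
    intro x y hx hy
    rw [hg_mem x hx, hg_mem y hy, hg_mem (x * y) (L.mul_mem hx hy)]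
    have : (⟨x * y, L.mul_mem hx hy⟩ : ↥L) = ⟨x, hx⟩ * ⟨y, hy⟩ := rfl
    rw [this, map_mul]; rfl
  have hg_inv : ∀ x, x ∈ L → g x⁻¹ = -g x := by
    intro x hx
    rw [hg_mem x hx, hg_mem x⁻¹ (L.inv_mem hx)]
    have : (⟨x⁻¹, L.inv_mem hx⟩ : ↥L) = (⟨x, hx⟩ : ↥L)⁻¹ := rfl
    rw [this, map_inv]; rfl
  -- key cardinality bound on finite sets of generators
  have key : ∀ T : Finset ι, T.card ≤ M := by
    intro T
    have hT : ∀ i : T, ∃ n, ((IsFreeGroup.of (i : ι) : ↥L) : F) ∈ K n :=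
      fun i => (hmemL _).1 (IsFreeGroup.of (i : ι) : ↥L).2
    choose f hf using hT
    set n := Finset.univ.sup f with hn
    have hfn : ∀ i : T, ((IsFreeGroup.of (i : ι) : ↥L) : F) ∈ K n :=
      fun i => hmono (Finset.le_sup (Finset.mem_univ i)) (hf i)
    obtain ⟨S, hS, hScard⟩ := hrk n
    set V : Submodule ℚ (ι →₀ ℚ) :=
      Submodule.span ℚ ((S.image g : Finset (ι →₀ ℚ)) : Set (ι →₀ ℚ)) with hVdef
    have hV : ∀ x ∈ K n, x ∈ L ∧ g x ∈ V := by
      intro x hx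
      rw [← hS] at hx
      induction hx using Subgroup.closure_induction with
      | mem x hx =>
        refine ⟨hKL n (hS ▸ Subgroup.subset_closure hx), Submodule.subset_span ?_⟩
        exact Finset.mem_coe.2 (Finset.mem_image_of_mem g hx)
      | one => exact ⟨L.one_mem, by rw [hg_one]; exact V.zero_mem⟩
      | mul x y hx hy ihx ihy =>
        exact ⟨L.mul_mem ihx.1 ihy.1,
          by rw [hg_mul x y ihx.1 ihy.1]; exact V.add_mem ihx.2 ihy.2⟩
      | inv x hx ih =>
        exact ⟨L.inv_mem ih.1, by rw [hg_inv x ih.1]; exact V.neg_mem ih.2⟩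
    have hsingle : ∀ i : T, Finsupp.single (i : ι) (1 : ℚ) ∈ V := by
      intro i
      have h2 := (hV _ (hfn i)).2
      rwa [hg_mem _ (IsFreeGroup.of (i : ι) : ↥L).2, Subtype.coe_eta, hφ] at h2
    let v : T → V := fun i => ⟨Finsupp.single (i : ι) (1 : ℚ), hsingle i⟩
    have hvind : LinearIndependent ℚ v := by
      apply LinearIndependent.of_comp V.subtype
      have hco : (V.subtype ∘ v) = fun i : T => Finsupp.single (i : ι) (1 : ℚ) := rfl
      rw [hco]
      have := (Finsupp.basisSingleOne (ι := ι) (R := ℚ)).linearIndependent.comp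
        (fun i : T => (i : ι)) Subtype.val_injective
      simpa [Finsupp.coe_basisSingleOne, Function.comp_def] using this
    haveI : FiniteDimensional ℚ V := FiniteDimensional.span_of_finite ℚ (Finset.finite_toSet _)
    have h1 : Fintype.card T ≤ Module.finrank ℚ V := hvind.fintype_card_le_finrank
    have h2 : Module.finrank ℚ V ≤ (S.image g).card := finrank_span_finset_le_card _
    have h3 : (S.image g).card ≤ S.card := Finset.card_image_le
    rw [Fintype.card_coe] at h1
    omega
  -- hence the generating type is finite with at most M elements
  have hfinι : Finite ι := by
    by_contra hinf
    rw [not_finite_iff_infinite] at hinf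
    obtain ⟨T, -, hT⟩ := (Set.infinite_univ (α := ι)).exists_subset_card_eq (M + 1)
    have := key T
    omega
  -- L is generated by the (finite) image of generators
  have hclos : Subgroup.closure (Set.range (IsFreeGroup.of : ι → ↥L)) = ⊤ := by
    have h0 := FreeGroup.closure_range_of ι
    have : Set.range (IsFreeGroup.of : ι → ↥L)
        = (IsFreeGroup.mulEquiv ↥L).toMonoidHom '' Set.range (FreeGroup.of : ι → FreeGroup ι) := by
      rw [← Set.range_comp]; rfl
    rw [this, ← MonoidHom.map_closure, h0]
    exact Subgroup.map_top_of_surjective _ (IsFreeGroup.mulEquiv ↥L).surjective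
  set gens : Set F := (↑) '' Set.range (IsFreeGroup.of : ι → ↥L) with hgens
  have hgensL : Subgroup.closure gens = L := by
    rw [hgens]
    rw [show ((↑) : ↥L → F) = L.subtype from rfl, ← MonoidHom.map_closure, hclos,
      ← MonoidHom.range_eq_map, Subgroup.range_subtype]
  have hgfin : gens.Finite := (Set.finite_range _).image _
  have hsub : ∀ x : hgfin.toFinset, ∃ m, (x : F) ∈ K m := by
    intro x
    have hx : (x : F) ∈ gens := hgfin.mem_toFinset.1 x.2
    exact (hmemL _).1 (hgensL ▸ Subgroup.subset_closure hx)
  choose f2 hf2 using hsub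
  set p := Finset.univ.sup f2 with hp
  have hgp : gens ⊆ (K p : Set F) := by
    intro x hx
    exact hmono (Finset.le_sup (Finset.mem_univ (⟨x, hgfin.mem_toFinset.2 hx⟩ : hgfin.toFinset)))
      (hf2 ⟨x, hgfin.mem_toFinset.2 hx⟩)
  have hLp : L ≤ K p := by
    rw [← hgensL]
    exact (Subgroup.closure_le _).2 hgp
  exact ⟨p, fun i hi => le_antisymm ((hKL i).trans hLp) (hmono hi)⟩
end
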